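/- arXiv:1602.03996 — 7 statements merged into one kernel-verified Lean document; each statement's English description precedes it below -/
import Mathlib

section
/- Let (S,Σ) be a measurable space and let (μ_α)_{α∈Λ} be a nonempty family of measures on (S,Σ). Then for every measurable set A ∈ Σ, the supremum measure satisfies (⨆_{α∈Λ} μ_α)(A) = sup { Σ_{n=1}^N sup_{α∈Λ} μ_α(A_n) : N ≥ 1, A_1,…,A_N ∈ Σ pairwise disjoint with A = ⋃_{n=1}^N A_n }, where all values are taken in [0,∞]. -/
open MeasureTheory
open scoped ENNReal

section Aux

variable {S : Type*} [MeasurableSpace S] {Λ : Type*} [Nonempty Λ]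

/-- The set of finite-partition sums used in the statement. -/
def pSet (μ : Λ → Measure S) (A : Set S) : Set ℝ≥0∞ :=
  {x : ℝ≥0∞ | ∃ (N : ℕ) (B : Fin (N + 1) → Set S),
    (∀ n, MeasurableSet (B n)) ∧ Pairwise (Function.onFun Disjoint B) ∧
    (⋃ n, B n) = A ∧ x = ∑ n, ⨆ α, μ α (B n)}

lemma mem_pSet_of (μ : Λ → Measure S) {A : Set S} {ι : Type} [Fintype ι] [Nonempty ι]
    (B : ι → Set S) (hm : ∀ n, MeasurableSet (B n))
    (hd : Pairwise (Function.onFun Disjoint B))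
    (hu : (⋃ n, B n) = A) : (∑ n, ⨆ α, μ α (B n)) ∈ pSet μ A := by
  obtain ⟨N, hN⟩ := Nat.exists_eq_succ_of_ne_zero (Fintype.card_ne_zero (α := ι))
  let e : ι ≃ Fin (N + 1) := (Fintype.equivFin ι).trans (finCongr hN)
  refine ⟨N, B ∘ e.symm, fun n => hm _, fun i j hij => hd (e.symm.injective.ne hij), ?_, ?_⟩
  · exact (e.symm.surjective.iUnion_comp B).trans hu
  · exact (Equiv.sum_comp e.symm fun n => ⨆ α, μ α (B n)).symm

lemma sup_mem_pSet (μ : Λ → Measure S) {A : Set S} (hA : MeasurableSet A) :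
    (⨆ α, μ α A) ∈ pSet μ A := by
  haveI : Subsingleton (Fin (0 + 1)) := ⟨fun a b => Fin.ext (by omega)⟩
  refine ⟨0, fun _ => A, fun _ => hA, Subsingleton.pairwise, Set.iUnion_const A, ?_⟩
  simp

lemma pSet_le (μ : Λ → Measure S) {A : Set S} {x : ℝ≥0∞} (hx : x ∈ pSet μ A) :
    x ≤ (⨆ α, μ α) A := by
  obtain ⟨N, B, hm, hd, hu, rfl⟩ := hx
  calc ∑ n, ⨆ α, μ α (B n) ≤ ∑ n, (⨆ α, μ α) (B n) :=
        Finset.sum_le_sum fun n _ =>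
          iSup_le fun α => Measure.le_iff'.mp (le_iSup μ α) (B n)
    _ = (⨆ α, μ α) A := by rw [← hu, measure_iUnion hd hm, tsum_fintype]

lemma sSup_pSet_add_le (μ : Λ → Measure S) {A B : Set S} (hA : MeasurableSet A)
    (hB : MeasurableSet B) (hd : Disjoint A B) :
    sSup (pSet μ A) + sSup (pSet μ B) ≤ sSup (pSet μ (A ∪ B)) := by
  have hAne : (pSet μ A).Nonempty := ⟨_, sup_mem_pSet μ hA⟩
  have hBne : (pSet μ B).Nonempty := ⟨_, sup_mem_pSet μ hB⟩
  haveI := hAne.to_subtype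
  haveI := hBne.to_subtype
  rw [sSup_eq_iSup' (pSet μ A), sSup_eq_iSup' (pSet μ B)]
  refine ENNReal.iSup_add_iSup_le fun x y => ?_
  obtain ⟨x, N₁, B₁, hm₁, hd₁, hu₁, hx⟩ := x
  obtain ⟨y, N₂, B₂, hm₂, hd₂, hu₂, hy⟩ := y
  simp only [hx, hy]
  refine le_sSup ?_
  have hmem := mem_pSet_of μ (ι := Fin (N₁ + 1) ⊕ Fin (N₂ + 1)) (A := A ∪ B) (Sum.elim B₁ B₂)
    (fun n => by cases n <;> simp [hm₁ _, hm₂ _])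
    (by
      have hsub₁ : ∀ i, B₁ i ⊆ A := fun i => hu₁ ▸ Set.subset_iUnion B₁ i
      have hsub₂ : ∀ i, B₂ i ⊆ B := fun i => hu₂ ▸ Set.subset_iUnion B₂ i
      rintro (i | i) (j | j) hij
      · exact hd₁ fun h => hij (congrArg Sum.inl h)
      · exact hd.mono (hsub₁ i) (hsub₂ j)
      · exact (hd.mono (hsub₁ j) (hsub₂ i)).symm
      · exact hd₂ fun h => hij (congrArg Sum.inr h))
    (by rw [Set.iUnion_sum]; simp only [Sum.elim_inl, Sum.elim_inr, hu₁, hu₂])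
  rwa [Fintype.sum_sum_type] at hmem

lemma sSup_pSet_mono (μ : Λ → Measure S) {A B : Set S} (hA : MeasurableSet A)
    (hB : MeasurableSet B) (h : A ⊆ B) : sSup (pSet μ A) ≤ sSup (pSet μ B) := by
  calc sSup (pSet μ A) ≤ sSup (pSet μ A) + sSup (pSet μ (B \ A)) := le_self_add
    _ ≤ sSup (pSet μ (A ∪ B \ A)) :=
        sSup_pSet_add_le μ hA (hB.diff hA) Set.disjoint_sdiff_right
    _ = sSup (pSet μ B) := by rw [Set.union_diff_cancel h]

lemma pSet_empty (μ : Λ → Measure S) : sSup (pSet μ ∅) = 0 := by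
  refine le_antisymm (sSup_le fun x hx => ?_) zero_le
  have := pSet_le μ hx
  simpa using this

lemma pSet_iUnion (μ : Λ → Measure S) (f : ℕ → Set S) (hf : ∀ i, MeasurableSet (f i))
    (hfd : Pairwise (Function.onFun Disjoint f)) :
    sSup (pSet μ (⋃ i, f i)) = ∑' i, sSup (pSet μ (f i)) := by
  refine le_antisymm (sSup_le fun x hx => ?_) ?_
  · obtain ⟨N, B, hm, hd, hu, rfl⟩ := hx
    have key : ∀ n, (⨆ α, μ α (B n)) ≤ ∑' i, ⨆ α, μ α (B n ∩ f i) := by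
      intro n
      refine iSup_le fun α => ?_
      have hBn : B n = ⋃ i, B n ∩ f i := by
        rw [← Set.inter_iUnion, Set.inter_eq_left.mpr (hu ▸ Set.subset_iUnion B n)]
      calc μ α (B n) = μ α (⋃ i, B n ∩ f i) := by rw [← hBn]
        _ ≤ ∑' i, μ α (B n ∩ f i) := measure_iUnion_le _
        _ ≤ ∑' i, ⨆ α', μ α' (B n ∩ f i) :=
            ENNReal.tsum_le_tsum fun i => le_iSup (fun α' => μ α' (B n ∩ f i)) α
    calc ∑ n, ⨆ α, μ α (B n) ≤ ∑ n, ∑' i, ⨆ α, μ α (B n ∩ f i) :=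
          Finset.sum_le_sum fun n _ => key n
      _ = ∑' i, ∑ n, ⨆ α, μ α (B n ∩ f i) :=
          (Summable.tsum_finsetSum fun n _ => ENNReal.summable).symm
      _ ≤ ∑' i, sSup (pSet μ (f i)) := by
          refine ENNReal.tsum_le_tsum fun i => le_sSup ?_
          refine ⟨N, fun n => B n ∩ f i, fun n => (hm n).inter (hf i),
            fun a b hab => (hd hab).mono Set.inter_subset_left Set.inter_subset_left,
            ?_, rfl⟩
          rw [← Set.iUnion_inter, hu, Set.inter_eq_right.mpr (Set.subset_iUnion f i)]
  · rw [ENNReal.tsum_eq_iSup_nat]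
    refine iSup_le fun k => ?_
    have H : ∀ k : ℕ, ∑ i ∈ Finset.range k, sSup (pSet μ (f i)) ≤
        sSup (pSet μ (⋃ i ∈ Finset.range k, f i)) := by
      intro k
      induction k with
      | zero => simp
      | succ k ih =>
        rw [Finset.sum_range_succ]
        calc _ ≤ sSup (pSet μ (⋃ i ∈ Finset.range k, f i)) + sSup (pSet μ (f k)) :=
              add_le_add_left ih _
          _ ≤ sSup (pSet μ ((⋃ i ∈ Finset.range k, f i) ∪ f k)) := by
              refine sSup_pSet_add_le μ (MeasurableSet.biUnion (Finset.range k).countable_toSet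
                fun i _ => hf i) (hf k) ?_
              refine Set.disjoint_iUnion₂_left.mpr fun i hi => ?_
              exact hfd (Nat.ne_of_lt (Finset.mem_range.mp (Finset.mem_coe.mp hi)))
          _ = sSup (pSet μ (⋃ i ∈ Finset.range (k + 1), f i)) := by
              congr 1
              rw [Finset.range_add_one]
              simp [Set.biUnion_insert, Set.union_comm]
    refine (H k).trans (sSup_pSet_mono μ (MeasurableSet.biUnion
      (Finset.range k).countable_toSet fun i _ => hf i) (MeasurableSet.iUnion hf) ?_)
    exact Set.iUnion₂_subset fun i _ => Set.subset_iUnion f i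

end Aux

/-- The supremum of a nonempty family of measures evaluated on a measurable set `A` equals the
supremum, over all finite measurable partitions of `A` into pairwise disjoint pieces, of the sum
over the pieces of the pointwise suprema of the measures. -/
theorem stmt0 {S : Type*} [MeasurableSpace S] {Λ : Type*} [Nonempty Λ]
    (μ : Λ → Measure S) {A : Set S} (hA : MeasurableSet A) :
    (⨆ α, μ α) A =
      sSup {x : ℝ≥0∞ | ∃ (N : ℕ) (B : Fin (N + 1) → Set S),
        (∀ n, MeasurableSet (B n)) ∧ Pairwise (Function.onFun Disjoint B) ∧
        (⋃ n, B n) = A ∧ x = ∑ n, ⨆ α, μ α (B n)} := by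
  let ν : Measure S := Measure.ofMeasurable (fun A _ => sSup (pSet μ A))
    (pSet_empty μ) (fun f hf hfd => pSet_iUnion μ f hf hfd)
  have hν : ∀ s : Set S, MeasurableSet s → ν s = sSup (pSet μ s) :=
    fun s hs => Measure.ofMeasurable_apply s hs
  refine le_antisymm ?_ (sSup_le fun x hx => pSet_le μ hx)
  have hle : (⨆ α, μ α) ≤ ν := by
    refine iSup_le fun α => Measure.le_iff.mpr fun s hs => ?_
    rw [hν s hs]
    exact le_trans (le_iSup (fun α' => μ α' s) α) (le_sSup (sup_mem_pSet μ hs))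
  calc (⨆ α, μ α) A ≤ ν A := Measure.le_iff.mp hle A hA
    _ = sSup (pSet μ A) := hν A hA
end

section
/- Let (μ_α)_{α∈Λ} be a nonempty family of Borel measures on ℝ whose supremum measure μ̌ = ⨆_{α∈Λ} μ_α is finite on bounded intervals. Then for all real numbers a < b, μ̌((a,b]) = sup { Σ_{n=1}^N sup_{α∈Λ} μ_α((t_{n-1},t_n]) : N ≥ 1, a = t_0 < t_1 < … < t_N = b }. Moreover, the supremum on the right-hand side is unchanged if the interior partition points t_1,…,t_{N-1} are additionally required to be rational. -/
open MeasureTheory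
open scoped ENNReal

open Set Filter

set_option linter.unusedSectionVars false
set_option maxHeartbeats 1000000

namespace Stmt2Aux

variable {Λ : Type*} [Nonempty Λ]


noncomputable def f (μ : Λ → Measure ℝ) (x y : ℝ) : ℝ≥0∞ := ⨆ α, μ α (Set.Ioc x y)

def P (μ : Λ → Measure ℝ) (a b : ℝ) : Set ℝ≥0∞ :=
  {x : ℝ≥0∞ | ∃ (N : ℕ) (t : Fin (N + 1) → ℝ), 0 < N ∧ StrictMono t ∧
    t 0 = a ∧ t (Fin.last N) = b ∧
    x = ∑ i : Fin N, ⨆ α, μ α (Set.Ioc (t i.castSucc) (t i.succ))}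

lemma chain_lt {T : ℕ → ℝ} {N : ℕ} (h : ∀ i < N, T i < T (i + 1)) :
    ∀ {i j}, i < j → j ≤ N → T i < T j := by
  intro i j hij hjN
  induction j with
  | zero => omega
  | succ j ih =>
    rcases Nat.lt_succ_iff_lt_or_eq.mp hij with h' | h'
    · exact (ih h' (by omega)).trans (h j (by omega))
    · subst h'; exact h i (by omega)

lemma chain_le {T : ℕ → ℝ} {N : ℕ} (h : ∀ i < N, T i ≤ T (i + 1)) :
    ∀ {i j}, i ≤ j → j ≤ N → T i ≤ T j := by
  intro i j hij hjN
  induction j with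
  | zero => simp_all
  | succ j ih =>
    rcases Nat.lt_succ_iff_lt_or_eq.mp (Nat.lt_succ_of_le hij) with h' | h'
    · exact (ih (by omega) (by omega)).trans (h j (by omega))
    · subst h'; rfl

lemma mem_P_of (μ : Λ → Measure ℝ) {x y : ℝ} (T : ℕ → ℝ) (N : ℕ) (hN : 0 < N)
    (hc : ∀ i < N, T i < T (i + 1)) (h0 : T 0 = x) (hE : T N = y) :
    (∑ i ∈ Finset.range N, f μ (T i) (T (i + 1))) ∈ P μ x y := by
  refine ⟨N, fun i => T i.val, hN, ?_, h0, hE, ?_⟩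
  · intro i j hij
    exact chain_lt hc hij (by omega)
  · rw [← Fin.sum_univ_eq_sum_range (fun k => f μ (T k) (T (k + 1))) N]
    rfl

lemma exists_of_mem_P (μ : Λ → Measure ℝ) {x y : ℝ} {z : ℝ≥0∞} (hz : z ∈ P μ x y) :
    ∃ (N : ℕ) (T : ℕ → ℝ), 0 < N ∧ (∀ i < N, T i < T (i + 1)) ∧ T 0 = x ∧ T N = y ∧
      z = ∑ i ∈ Finset.range N, f μ (T i) (T (i + 1)) := by
  obtain ⟨N, t, hN, hsm, h0, hE, rfl⟩ := hz
  refine ⟨N, fun n => t ⟨min n N, by omega⟩, hN, ?_, ?_, ?_, ?_⟩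
  · intro i hi
    apply hsm
    simp only [Fin.lt_def]
    omega
  · convert h0 using 2
    ext; simp
  · convert hE using 2
    simp [Fin.last]
  · rw [← Fin.sum_univ_eq_sum_range (fun k => f μ (t ⟨min k N, by omega⟩) (t ⟨min (k+1) N, by omega⟩)) N]
    apply Finset.sum_congr rfl
    intro i _
    have h1 : (⟨min i.val N, by omega⟩ : Fin (N+1)) = i.castSucc := by
      ext; simp [Nat.min_eq_left i.isLt.le]
    have h2 : (⟨min (i.val+1) N, by omega⟩ : Fin (N+1)) = i.succ := by
      ext; simp [Nat.min_eq_left i.isLt]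
    rw [f, h1, h2]



section B
variable (μ : Λ → Measure ℝ)

lemma f_empty {x y : ℝ} (h : y ≤ x) : f μ x y = 0 := by
  simp [f, Set.Ioc_eq_empty (not_lt.mpr h)]

lemma f_le (x y : ℝ) : f μ x y ≤ (⨆ α, μ α) (Set.Ioc x y) :=
  iSup_le fun α => Measure.le_iff'.1 (le_iSup μ α) _

lemma le_f (α : Λ) (x y : ℝ) : μ α (Set.Ioc x y) ≤ f μ x y := le_iSup (fun α => μ α (Set.Ioc x y)) α

lemma f_split {x y z : ℝ} (hxy : x ≤ y) (hyz : y ≤ z) : f μ x z ≤ f μ x y + f μ y z := by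
  refine iSup_le fun α => ?_
  calc μ α (Set.Ioc x z) = μ α (Set.Ioc x y ∪ Set.Ioc y z) := by rw [Set.Ioc_union_Ioc_eq_Ioc hxy hyz]
    _ ≤ μ α (Set.Ioc x y) + μ α (Set.Ioc y z) := measure_union_le _ _
    _ ≤ f μ x y + f μ y z := add_le_add (le_f μ α x y) (le_f μ α y z)

/-- additivity of a measure along a monotone chain -/
lemma sum_Ioc (m : Measure ℝ) (T : ℕ → ℝ) (N : ℕ) (hm : ∀ i < N, T i ≤ T (i + 1)) :
    ∑ i ∈ Finset.range N, m (Set.Ioc (T i) (T (i + 1))) = m (Set.Ioc (T 0) (T N)) := by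
  induction N with
  | zero => simp
  | succ N ih =>
    have h0N : T 0 ≤ T N := by
      clear ih
      induction N with
      | zero => exact le_refl _
      | succ N ih2 => exact (ih2 (fun i hi => hm i (by omega))).trans (hm N (by omega))
    rw [Finset.sum_range_succ, ih (fun i hi => hm i (by omega)),
      ← measure_union (Set.disjoint_left.mpr fun x hx hx' => absurd hx.2 (not_le.mpr hx'.1))
        measurableSet_Ioc,
      Set.Ioc_union_Ioc_eq_Ioc h0N (hm N (by omega))]

end B

section C
variable (μ : Λ → Measure ℝ)

noncomputable def S (μ : Λ → Measure ℝ) (a b : ℝ) : ℝ≥0∞ := sSup (P μ a b)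

lemma P_le {x y : ℝ} {z : ℝ≥0∞} (hz : z ∈ P μ x y) : z ≤ (⨆ α, μ α) (Set.Ioc x y) := by
  obtain ⟨N, T, hN, hc, h0, hE, rfl⟩ := exists_of_mem_P μ hz
  calc ∑ i ∈ Finset.range N, f μ (T i) (T (i + 1))
      ≤ ∑ i ∈ Finset.range N, (⨆ α, μ α) (Set.Ioc (T i) (T (i + 1))) :=
        Finset.sum_le_sum fun i _ => f_le μ _ _
    _ = (⨆ α, μ α) (Set.Ioc (T 0) (T N)) := sum_Ioc _ T N fun i hi => (hc i hi).le
    _ = (⨆ α, μ α) (Set.Ioc x y) := by rw [h0, hE]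

lemma S_le (x y : ℝ) : S μ x y ≤ (⨆ α, μ α) (Set.Ioc x y) := sSup_le fun _ hz => P_le μ hz

lemma f_mem_P {x y : ℝ} (h : x < y) : f μ x y ∈ P μ x y := by
  have := mem_P_of (x := x) (y := y) μ (fun n => if n = 0 then x else y) 1 one_pos
    (fun i hi => by interval_cases i <;> simpa using h) (by simp) (by simp)
  simpa using this

lemma f_le_S {x y : ℝ} (h : x < y) : f μ x y ≤ S μ x y := le_sSup (f_mem_P μ h)

lemma P_nonempty {x y : ℝ} (h : x < y) : (P μ x y).Nonempty := ⟨_, f_mem_P μ h⟩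

lemma sum_range_add' (g : ℕ → ℝ≥0∞) (m n : ℕ) :
    ∑ i ∈ Finset.range (m + n), g i =
      (∑ i ∈ Finset.range m, g i) + ∑ i ∈ Finset.range n, g (m + i) := by
  induction n with
  | zero => simp
  | succ n ih => rw [← Nat.add_assoc, Finset.sum_range_succ, ih, Finset.sum_range_succ, add_assoc]

lemma concat_mem {x y z : ℝ} {p q : ℝ≥0∞} (hp : p ∈ P μ x y) (hq : q ∈ P μ y z) :
    p + q ∈ P μ x z := by
  obtain ⟨N, T1, hN, hc1, h01, hE1, rfl⟩ := exists_of_mem_P μ hp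
  obtain ⟨K, T2, hK, hc2, h02, hE2, rfl⟩ := exists_of_mem_P μ hq
  set T : ℕ → ℝ := fun n => if n < N then T1 n else T2 (n - N) with hT
  have hTa : ∀ n, n < N → T n = T1 n := fun n hn => by simp [hT, hn]
  have hTb : ∀ n, N ≤ n → T n = T2 (n - N) := fun n hn => by simp [hT, Nat.not_lt.mpr hn]
  have hTN : T N = T1 N := by
    rw [hTb N le_rfl]; simp [h02, hE1]
  have key : ∀ i < N + K, T i < T (i + 1) ∧
      f μ (T i) (T (i + 1)) = (if i < N then f μ (T1 i) (T1 (i+1)) else f μ (T2 (i-N)) (T2 (i-N+1))) := by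
    intro i hi
    rcases lt_or_ge i N with h' | h'
    · have e1 : T i = T1 i := hTa i h'
      have e2 : T (i + 1) = T1 (i + 1) := by
        rcases lt_or_eq_of_le (Nat.succ_le_of_lt h') with h'' | h''
        · exact hTa _ h''
        · have hiN : i + 1 = N := h''
          rw [hiN, hTN]
      rw [e1, e2]
      exact ⟨hc1 i h', by simp [h']⟩
    · have e1 : T i = T2 (i - N) := hTb i h'
      have e2 : T (i + 1) = T2 (i - N + 1) := by
        rw [hTb (i+1) (by omega)]; congr 1; omega
      rw [e1, e2]
      exact ⟨hc2 (i - N) (by omega), by simp [Nat.not_lt.mpr h']⟩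
  have hsum : ∑ i ∈ Finset.range (N + K), f μ (T i) (T (i + 1)) =
      (∑ i ∈ Finset.range N, f μ (T1 i) (T1 (i + 1))) +
        ∑ i ∈ Finset.range K, f μ (T2 i) (T2 (i + 1)) := by
    rw [sum_range_add']
    congr 1
    · exact Finset.sum_congr rfl fun i hi => by
        have := (key i (by simp at hi; omega)).2
        simpa [Finset.mem_range.mp hi] using this
    · refine Finset.sum_congr rfl fun i hi => ?_
      have hi' : i < K := Finset.mem_range.mp hi
      have := (key (N + i) (by omega)).2
      simp only [Nat.not_lt.mpr (Nat.le_add_right N i), if_false, Nat.add_sub_cancel_left] at this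
      rw [this]
  rw [← hsum]
  exact mem_P_of μ T (N + K) (by omega) (fun i hi => (key i hi).1)
    (by rw [hTa 0 hN]; exact h01) (by rw [hTb _ (Nat.le_add_right N K)]; simpa using hE2)

lemma S_superadd {x y z : ℝ} (hxy : x < y) (hyz : y < z) :
    S μ x y + S μ y z ≤ S μ x z := by
  rw [S, S, sSup_eq_iSup', sSup_eq_iSup']
  have : Nonempty (P μ x y) := (P_nonempty μ hxy).to_subtype
  have : Nonempty (P μ y z) := (P_nonempty μ hyz).to_subtype
  exact ENNReal.iSup_add_iSup_le fun p q => le_sSup (concat_mem μ p.2 q.2)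

end C

section D
variable (μ : Λ → Measure ℝ) (hfin : ∀ x y : ℝ, (⨆ α, μ α) (Set.Icc x y) ≠ ⊤)
variable {a b : ℝ} (hab : a < b)
include hfin hab

lemma Ioc_ne_top (x y : ℝ) : (⨆ α, μ α) (Set.Ioc x y) ≠ ⊤ :=
  fun h => hfin x y (top_le_iff.mp (h ▸ measure_mono Set.Ioc_subset_Icc_self))

lemma S_ne_top (x y : ℝ) : S μ x y ≠ ⊤ :=
  fun h => Ioc_ne_top μ hfin hab x y (top_le_iff.mp (h ▸ S_le μ x y))

lemma f_ne_top (x y : ℝ) : f μ x y ≠ ⊤ :=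
  fun h => Ioc_ne_top μ hfin hab x y (top_le_iff.mp (h ▸ f_le μ x y))

/-- the cumulative function on [a,b] -/
noncomputable def G (μ : Λ → Measure ℝ) (a b : ℝ) : ℝ → ℝ :=
  fun x => if x ≤ a then 0 else (S μ a (min x b)).toReal

lemma G_nonneg (x : ℝ) : 0 ≤ G μ a b x := by
  rw [G]; split
  · exact le_rfl
  · exact ENNReal.toReal_nonneg

lemma S_mono_right {x y : ℝ} (hax : a < x) (hxy : x ≤ y) : S μ a x ≤ S μ a y := by
  rcases eq_or_lt_of_le hxy with rfl | h
  · exact le_rfl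
  · exact le_trans (le_add_right le_rfl) (S_superadd μ hax h)

lemma G_mono : Monotone (G μ a b) := by
  intro x y hxy
  rw [G, G]
  rcases le_or_gt x a with hx | hx
  · rw [if_pos hx]
    split
    · exact le_rfl
    · exact ENNReal.toReal_nonneg
  · rw [if_neg (not_le.mpr hx), if_neg (not_le.mpr (hx.trans_le hxy))]
    have h1 : a < min x b := lt_min hx hab
    refine ENNReal.toReal_mono (S_ne_top μ hfin hab a _) (S_mono_right μ hfin hab h1 ?_)
    exact min_le_min hxy le_rfl

/-- The right-continuous modification: a Stieltjes function. -/
noncomputable def FS : StieltjesFunction ℝ := (G_mono μ hfin hab).stieltjesFunction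

lemma FS_apply (x : ℝ) : (FS μ hfin hab) x = Function.rightLim (G μ a b) x := rfl

lemma FS_b : (FS μ hfin hab) b = (S μ a b).toReal := by
  have hconst : ∀ y, b ≤ y → G μ a b y = (S μ a b).toReal := by
    intro y hy
    rw [G, if_neg (not_le.mpr (hab.trans_le hy)), min_eq_right hy]
  rw [FS_apply]
  refine le_antisymm ?_ ?_
  · have := (G_mono μ hfin hab).rightLim_le (show b < b + 1 by linarith)
    rwa [hconst (b+1) (by linarith)] at this
  · have := (G_mono μ hfin hab).le_rightLim (le_refl b)
    rwa [hconst b le_rfl] at this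

lemma FS_nonneg (x : ℝ) : 0 ≤ (FS μ hfin hab) x := by
  rw [FS_apply]
  exact le_trans (G_nonneg μ hfin hab x) ((G_mono μ hfin hab).le_rightLim le_rfl)

/-- Key estimate: for any real `c < d`, any member of the family gives the trimmed interval
`Ioc c d ∩ Ioc a b` measure at most the increment of `FS`. -/
lemma key_bound (α : Λ) (c d : ℝ) :
    μ α (Set.Ioc c d ∩ Set.Ioc a b) ≤ ENNReal.ofReal ((FS μ hfin hab) d - (FS μ hfin hab) c) := by
  rw [Set.Ioc_inter_Ioc]
  set c' := max c a
  set d' := min d b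
  rcases le_or_gt d' c' with h | h
  · rw [Set.Ioc_eq_empty (not_lt.mpr h)]; simp
  · -- c' < d'
    have hcc' : c ≤ c' := le_max_left _ _
    have hd'd : d' ≤ d := min_le_left _ _
    have hac' : a ≤ c' := le_max_right _ _
    have hd'b : d' ≤ b := min_le_right _ _
    have hGF : ∀ c'' , c' < c'' → c'' < d' →
        (μ α) (Set.Ioc c'' d') ≤ ENNReal.ofReal ((FS μ hfin hab) d - (FS μ hfin hab) c) := by
      intro c'' h1 h2
      have hac'' : a < c'' := lt_of_le_of_lt hac' h1
      have hd'1 : c'' < d' := h2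
      have hGd' : G μ a b d' = (S μ a d').toReal := by
        rw [G, if_neg (not_le.mpr (hac''.trans hd'1)), min_eq_left hd'b]
      have hGc'' : G μ a b c'' = (S μ a c'').toReal := by
        rw [G, if_neg (not_le.mpr hac''), min_eq_left (le_of_lt (lt_of_lt_of_le hd'1 hd'b))]
      have hsum : S μ a c'' + S μ c'' d' ≤ S μ a d' := S_superadd μ hac'' hd'1
      have hfd' : (S μ a d') ≠ ⊤ := S_ne_top μ hfin hab a d'
      have h3 : (S μ c'' d').toReal ≤ G μ a b d' - G μ a b c'' := by
        rw [hGd', hGc'']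
        have := ENNReal.toReal_mono hfd' hsum
        rw [ENNReal.toReal_add (S_ne_top μ hfin hab a c'') (S_ne_top μ hfin hab c'' d')] at this
        linarith
      have h4 : G μ a b d' - G μ a b c'' ≤ (FS μ hfin hab) d - (FS μ hfin hab) c := by
        have e1 : G μ a b d' ≤ (FS μ hfin hab) d :=
          (G_mono μ hfin hab).le_rightLim (le_trans hd'd le_rfl)
        have e2 : (FS μ hfin hab) c ≤ G μ a b c'' :=
          (G_mono μ hfin hab).rightLim_le (lt_of_le_of_lt hcc' h1)
        linarith
      calc μ α (Set.Ioc c'' d') ≤ f μ c'' d' := le_f μ α _ _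
        _ ≤ S μ c'' d' := f_le_S μ hd'1
        _ = ENNReal.ofReal ((S μ c'' d').toReal) :=
            (ENNReal.ofReal_toReal (S_ne_top μ hfin hab c'' d')).symm
        _ ≤ ENNReal.ofReal ((FS μ hfin hab) d - (FS μ hfin hab) c) := by
            exact ENNReal.ofReal_le_ofReal (le_trans h3 h4)
    -- approximate from inside
    set δ := d' - c' with hδ
    have hδpos : 0 < δ := sub_pos.mpr h
    have hU : Set.Ioc c' d' = ⋃ n : ℕ, Set.Ioc (c' + δ / (n + 2)) d' := by
      ext x
      simp only [Set.mem_Ioc, Set.mem_iUnion]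
      constructor
      · rintro ⟨hx1, hx2⟩
        obtain ⟨n, hn⟩ := exists_nat_gt (δ / (x - c'))
        refine ⟨n, ?_, hx2⟩
        have hxc : 0 < x - c' := sub_pos.mpr hx1
        have : δ / (n + 2) < x - c' := by
          rw [div_lt_iff₀ (by positivity)]
          have h5 : δ / (x - c') < n + 2 := by
            have : (n : ℝ) < n + 2 := by linarith
            linarith
          calc δ = (δ / (x - c')) * (x - c') := by field_simp
            _ < (n + 2) * (x - c') := by
                exact mul_lt_mul_of_pos_right h5 hxc
            _ = (x - c') * (n + 2) := by ring
        linarith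
      · rintro ⟨n, hn1, hn2⟩
        constructor
        · have : 0 < δ / (n + 2) := by positivity
          linarith
        · exact hn2
    have hmono : Monotone fun n : ℕ => Set.Ioc (c' + δ / (n + 2)) d' := by
      intro m n hmn
      apply Set.Ioc_subset_Ioc_left
      have : δ / (n + 2) ≤ δ / (m + 2) := by
        apply div_le_div_of_nonneg_left hδpos.le (by positivity)
        linarith [(Nat.cast_le (α := ℝ)).mpr hmn]
      linarith
    rw [hU, Monotone.measure_iUnion hmono]
    refine iSup_le fun n => ?_
    rcases lt_or_ge (c' + δ / (n + 2)) d' with hlt | hge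
    · refine hGF _ ?_ hlt
      have : 0 < δ / (n + 2) := by positivity
      linarith
    · rw [Set.Ioc_eq_empty (not_lt.mpr hge)]; simp

end D

section E
variable (μ : Λ → Measure ℝ) (hfin : ∀ x y : ℝ, (⨆ α, μ α) (Set.Icc x y) ≠ ⊤)
variable {a b : ℝ} (hab : a < b)
include hfin hab

lemma stieltjes_measure_eq_outer (F : StieltjesFunction ℝ) (s : Set ℝ) :
    F.measure s = F.outer s := by
  rw [StieltjesFunction.measure]
  rfl

lemma dominates (α : Λ) :
    μ α ≤ (FS μ hfin hab).measure + (⨆ α, μ α).restrict (Set.Ioc a b)ᶜ := by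
  have houter : (OuterMeasure.restrict (Set.Ioc a b) (μ α).toOuterMeasure) ≤
      (FS μ hfin hab).outer := by
    rw [StieltjesFunction.outer, OuterMeasure.le_ofFunction]
    intro t
    rw [OuterMeasure.restrict_apply]
    rw [StieltjesFunction.length_eq]
    refine le_iInf fun c => le_iInf fun d => le_iInf fun hcd => ?_
    have h1 : (μ α).toOuterMeasure (t ∩ Set.Ioc a b) = μ α (t ∩ Set.Ioc a b) := rfl
    rw [h1]
    calc μ α (t ∩ Set.Ioc a b) ≤ μ α (Set.Ioc c d ∩ Set.Ioc a b) :=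
          measure_mono (Set.inter_subset_inter_left _
            (fun x hx => hcd ⟨hx, notMem_botSet_of_lt (sub_one_lt x)⟩))
      _ ≤ ENNReal.ofReal ((FS μ hfin hab) d - (FS μ hfin hab) c) := key_bound μ hfin hab α c d
  rw [Measure.le_iff]
  intro s hs
  have h1 : μ α s = μ α (s ∩ Set.Ioc a b) + μ α (s \ Set.Ioc a b) :=
    (measure_inter_add_diff s measurableSet_Ioc).symm
  rw [h1, Measure.add_apply, Measure.restrict_apply hs]
  refine add_le_add ?_ ?_
  · have h2 := houter s
    rw [OuterMeasure.restrict_apply] at h2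
    calc μ α (s ∩ Set.Ioc a b) = (μ α).toOuterMeasure (s ∩ Set.Ioc a b) := rfl
      _ ≤ (FS μ hfin hab).outer s := h2
      _ = (FS μ hfin hab).measure s := (stieltjes_measure_eq_outer μ hfin hab _ s).symm
  · rw [Set.diff_eq]
    exact Measure.le_iff'.1 (le_iSup μ α) _

lemma main_le : (⨆ α, μ α) (Set.Ioc a b) ≤ S μ a b := by
  have hub : (⨆ α, μ α) ≤ (FS μ hfin hab).measure + (⨆ α, μ α).restrict (Set.Ioc a b)ᶜ :=
    iSup_le fun α => dominates μ hfin hab α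
  have h2 := Measure.le_iff'.1 hub (Set.Ioc a b)
  rw [Measure.add_apply, Measure.restrict_apply measurableSet_Ioc, Set.inter_compl_self,
    measure_empty, add_zero, StieltjesFunction.measure_Ioc] at h2
  refine h2.trans ?_
  have h3 : (FS μ hfin hab) b - (FS μ hfin hab) a ≤ (S μ a b).toReal := by
    have := FS_nonneg μ hfin hab a
    have := FS_b μ hfin hab
    linarith
  calc ENNReal.ofReal ((FS μ hfin hab) b - (FS μ hfin hab) a)
      ≤ ENNReal.ofReal ((S μ a b).toReal) := ENNReal.ofReal_le_ofReal h3
    _ = S μ a b := ENNReal.ofReal_toReal (S_ne_top μ hfin hab a b)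

lemma part1 : (⨆ α, μ α) (Set.Ioc a b) = S μ a b :=
  le_antisymm (main_le μ hfin hab) (S_le μ a b)

end E

def Pq (μ : Λ → Measure ℝ) (a b : ℝ) : Set ℝ≥0∞ :=
  {x : ℝ≥0∞ | ∃ (N : ℕ) (t : Fin (N + 1) → ℝ), 0 < N ∧ StrictMono t ∧
    t 0 = a ∧ t (Fin.last N) = b ∧
    (∀ i : Fin (N + 1), i ≠ 0 → i ≠ Fin.last N → ∃ q : ℚ, t i = (q : ℝ)) ∧
    x = ∑ i : Fin N, ⨆ α, μ α (Set.Ioc (t i.castSucc) (t i.succ))}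

lemma Pq_subset (μ : Λ → Measure ℝ) (a b : ℝ) : Pq μ a b ⊆ P μ a b := by
  rintro z ⟨N, t, hN, hsm, h0, hE, _, hz⟩
  exact ⟨N, t, hN, hsm, h0, hE, hz⟩

lemma mem_Pq_of (μ : Λ → Measure ℝ) {x y : ℝ} (T : ℕ → ℝ) (N : ℕ) (hN : 0 < N)
    (hc : ∀ i < N, T i < T (i + 1)) (h0 : T 0 = x) (hE : T N = y)
    (hrat : ∀ i, 0 < i → i < N → ∃ q : ℚ, T i = (q : ℝ)) :
    (∑ i ∈ Finset.range N, f μ (T i) (T (i + 1))) ∈ Pq μ x y := by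
  refine ⟨N, fun i => T i.val, hN, ?_, h0, hE, ?_, ?_⟩
  · intro i j hij
    exact chain_lt hc hij (by omega)
  · intro i hi0 hiN
    refine hrat i.val ?_ ?_
    · have hne : i.val ≠ 0 := by
        intro h
        exact hi0 (Fin.ext (by simp [h]))
      exact Nat.pos_of_ne_zero hne
    · rcases lt_or_eq_of_le (Nat.lt_succ_iff.mp i.isLt) with h | h
      · exact h
      · exact absurd (Fin.ext (by simp [h, Fin.last])) hiN
  · rw [← Fin.sum_univ_eq_sum_range (fun k => f μ (T k) (T (k + 1))) N]
    rfl

section R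
variable (μ : Λ → Measure ℝ) (hfin : ∀ x y : ℝ, (⨆ α, μ α) (Set.Icc x y) ≠ ⊤)
variable {a b : ℝ} (hab : a < b)
include hfin hab

lemma small_interval (x : ℝ) {ε : ℝ≥0∞} (hε : 0 < ε) :
    ∃ u, x < u ∧ (⨆ α, μ α) (Set.Ioc x u) < ε := by
  set A : ℕ → Set ℝ := fun n => Set.Ioc x (x + ((n : ℝ) + 1)⁻¹) with hA
  have hAnti : Antitone A := by
    intro m n hmn
    apply Set.Ioc_subset_Ioc_right
    have h1 : (0:ℝ) < (m:ℝ) + 1 := by positivity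
    have h2 : ((m:ℝ) + 1) ≤ (n:ℝ) + 1 := by
      have : (m:ℝ) ≤ n := Nat.cast_le.mpr hmn
      linarith
    have := inv_anti₀ h1 h2
    linarith
  have hI : ⋂ n, A n = ∅ := by
    ext y
    simp only [hA, Set.mem_iInter, Set.mem_Ioc, Set.mem_empty_iff_false, iff_false, not_forall,
      not_and, not_le]
    by_cases hxy : x < y
    · obtain ⟨n, hn⟩ := exists_nat_gt (y - x)⁻¹
      refine ⟨n, fun _ => ?_⟩
      have hyx : 0 < y - x := sub_pos.mpr hxy
      have : ((n:ℝ) + 1)⁻¹ < y - x := by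
        rw [inv_lt_comm₀ (by positivity) hyx]
        linarith
      linarith
    · exact ⟨0, fun h => absurd h hxy⟩
  have hmeas := hAnti.measure_iInter (μ := ⨆ α, μ α)
    (fun n => measurableSet_Ioc.nullMeasurableSet)
    ⟨0, by simp only [hA]; exact Ioc_ne_top μ hfin hab x _⟩
  rw [hI, measure_empty] at hmeas
  have h2 : (⨅ n, (⨆ α, μ α) (A n)) < ε := by rw [← hmeas]; exact hε
  obtain ⟨n, hn⟩ := iInf_lt_iff.mp h2
  refine ⟨x + ((n:ℝ) + 1)⁻¹, ?_, ?_⟩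
  · have hp : (0:ℝ) < ((n:ℝ)+1)⁻¹ := by positivity
    linarith
  · simpa [hA] using hn

lemma le_sSup_Pq {z : ℝ≥0∞} (hz : z ∈ P μ a b) : z ≤ sSup (Pq μ a b) := by
  obtain ⟨N, T, hN, hc, h0, hE, rfl⟩ := exists_of_mem_P μ hz
  refine ENNReal.le_of_forall_pos_le_add fun ε hε htop => ?_
  set ε' : ℝ≥0∞ := (ε : ℝ≥0∞) / N with hε'
  have hε'pos : 0 < ε' := ENNReal.div_pos (by exact_mod_cast hε.ne') (by simp)
  -- choose rational interior points
  have hChoice : ∀ i, 0 < i → i < N → ∃ r : ℚ, T i < (r:ℝ) ∧ (r:ℝ) < T (i+1) ∧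
      (⨆ α, μ α) (Set.Ioc (T i) (r:ℝ)) < ε' := by
    intro i hi0 hiN
    obtain ⟨u, hu1, hu2⟩ := small_interval μ hfin hab (T i) hε'pos
    have hTi : T i < min u (T (i+1)) := lt_min hu1 (hc i hiN)
    obtain ⟨r, hr1, hr2⟩ := exists_rat_btwn hTi
    refine ⟨r, hr1, lt_of_lt_of_le hr2 (min_le_right _ _), ?_⟩
    exact lt_of_le_of_lt (measure_mono (Set.Ioc_subset_Ioc_right (le_of_lt
      (lt_of_lt_of_le hr2 (min_le_left _ _))))) hu2
  classical
  set Q : ℕ → ℝ := fun i => if h : 0 < i ∧ i < N then ((hChoice i h.1 h.2).choose : ℝ) else T i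
    with hQ
  have hQ0 : Q 0 = T 0 := by simp [hQ]
  have hQN : ∀ i, N ≤ i → Q i = T i := by
    intro i hi
    simp only [hQ]
    rw [dif_neg (by omega)]
  have hQint : ∀ i, 0 < i → i < N → T i < Q i ∧ Q i < T (i+1) ∧
      (⨆ α, μ α) (Set.Ioc (T i) (Q i)) < ε' ∧ ∃ r : ℚ, Q i = (r:ℝ) := by
    intro i h1 h2
    have hspec := (hChoice i h1 h2).choose_spec
    have : Q i = ((hChoice i h1 h2).choose : ℝ) := by simp [hQ, h1, h2]
    rw [this]
    exact ⟨hspec.1, hspec.2.1, hspec.2.2, ⟨_, rfl⟩⟩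
  have hTQ : ∀ i, i ≤ N → T i ≤ Q i := by
    intro i hi
    rcases Nat.eq_zero_or_pos i with rfl | h1
    · rw [hQ0]
    rcases lt_or_eq_of_le hi with h2 | rfl
    · exact (hQint i h1 h2).1.le
    · rw [hQN i le_rfl]
  have hQT : ∀ i, i < N → Q i < T (i+1) := by
    intro i hi
    rcases Nat.eq_zero_or_pos i with rfl | h1
    · rw [hQ0]; exact hc 0 hi
    · exact (hQint i h1 hi).2.1
  have hQc : ∀ i < N, Q i < Q (i+1) := by
    intro i hi
    exact lt_of_lt_of_le (hQT i hi) (hTQ (i+1) hi)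
  have hMb : ∀ i < N, (⨆ α, μ α) (Set.Ioc (T i) (Q i)) ≤ ε' := by
    intro i hi
    rcases Nat.eq_zero_or_pos i with rfl | h1
    · rw [hQ0]; simp
    · exact (hQint i h1 hi).2.2.1.le
  have hterm : ∀ i < N, f μ (T i) (T (i+1)) ≤ f μ (Q i) (Q (i+1)) + ε' := by
    intro i hi
    refine iSup_le fun α => ?_
    have hsub : Set.Ioc (T i) (T (i+1)) ⊆ Set.Ioc (T i) (Q i) ∪ Set.Ioc (Q i) (Q (i+1)) := by
      intro x hx
      rcases le_or_gt x (Q i) with h | h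
      · exact Or.inl ⟨hx.1, h⟩
      · exact Or.inr ⟨h, hx.2.trans (hTQ (i+1) hi)⟩
    calc μ α (Set.Ioc (T i) (T (i+1))) ≤ μ α (Set.Ioc (T i) (Q i) ∪ Set.Ioc (Q i) (Q (i+1))) :=
          measure_mono hsub
      _ ≤ μ α (Set.Ioc (T i) (Q i)) + μ α (Set.Ioc (Q i) (Q (i+1))) := measure_union_le _ _
      _ ≤ (⨆ α, μ α) (Set.Ioc (T i) (Q i)) + f μ (Q i) (Q (i+1)) := by
          gcongr
          · exact le_iSup μ α
          · exact le_f μ α _ _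
      _ ≤ f μ (Q i) (Q (i+1)) + ε' := by
          rw [add_comm]
          gcongr
          exact hMb i hi
  have hQmem : (∑ i ∈ Finset.range N, f μ (Q i) (Q (i+1))) ∈ Pq μ a b := by
    refine mem_Pq_of μ Q N hN hQc (by rw [hQ0, h0]) (by rw [hQN N le_rfl, hE]) ?_
    intro i h1 h2
    exact (hQint i h1 h2).2.2.2
  calc ∑ i ∈ Finset.range N, f μ (T i) (T (i+1))
      ≤ ∑ i ∈ Finset.range N, (f μ (Q i) (Q (i+1)) + ε') :=
        Finset.sum_le_sum fun i hi => hterm i (Finset.mem_range.mp hi)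
    _ = (∑ i ∈ Finset.range N, f μ (Q i) (Q (i+1))) + N * ε' := by
        rw [Finset.sum_add_distrib, Finset.sum_const, Finset.card_range, nsmul_eq_mul]
    _ ≤ sSup (Pq μ a b) + (ε : ℝ≥0∞) := by
        gcongr
        · exact le_sSup hQmem
        · rw [hε']
          exact ENNReal.mul_div_le
end R

section F
variable (μ : Λ → Measure ℝ) (hfin : ∀ x y : ℝ, (⨆ α, μ α) (Set.Icc x y) ≠ ⊤)
variable {a b : ℝ} (hab : a < b)
include hfin hab

lemma part2 : S μ a b = sSup (Pq μ a b) :=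
  le_antisymm (sSup_le fun _ hz => le_sSup_Pq μ hfin hab hz)
    (sSup_le_sSup (Pq_subset μ a b))

end F

end Stmt2Aux

/-- For a nonempty family of Borel measures on `ℝ` whose supremum measure is finite on bounded
intervals, the supremum measure of `(a, b]` is the supremum over finite partitions
`a = t₀ < t₁ < … < t_N = b` of the sums of pointwise suprema over the subintervals
`(t_{n-1}, t_n]`; moreover this supremum is unchanged if the interior partition points are
required to be rational. -/
theorem stmt2 {Λ : Type*} [Nonempty Λ] (μ : Λ → Measure ℝ)
    (hfin : ∀ a b : ℝ, (⨆ α, μ α) (Set.Icc a b) ≠ ⊤)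
    (a b : ℝ) (hab : a < b) :
    (⨆ α, μ α) (Set.Ioc a b) =
      sSup {x : ℝ≥0∞ | ∃ (N : ℕ) (t : Fin (N + 1) → ℝ), 0 < N ∧ StrictMono t ∧
        t 0 = a ∧ t (Fin.last N) = b ∧
        x = ∑ i : Fin N, ⨆ α, μ α (Set.Ioc (t i.castSucc) (t i.succ))} ∧
    sSup {x : ℝ≥0∞ | ∃ (N : ℕ) (t : Fin (N + 1) → ℝ), 0 < N ∧ StrictMono t ∧
        t 0 = a ∧ t (Fin.last N) = b ∧
        x = ∑ i : Fin N, ⨆ α, μ α (Set.Ioc (t i.castSucc) (t i.succ))} =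
      sSup {x : ℝ≥0∞ | ∃ (N : ℕ) (t : Fin (N + 1) → ℝ), 0 < N ∧ StrictMono t ∧
        t 0 = a ∧ t (Fin.last N) = b ∧
        (∀ i : Fin (N + 1), i ≠ 0 → i ≠ Fin.last N → ∃ q : ℚ, t i = (q : ℝ)) ∧
        x = ∑ i : Fin N, ⨆ α, μ α (Set.Ioc (t i.castSucc) (t i.succ))} := by
  exact ⟨Stmt2Aux.part1 μ hfin hab, Stmt2Aux.part2 μ hfin hab⟩
end

section
/- Let (S,Σ,ν) be a measure space, let F be a nonempty set of measurable functions from S into [0,∞], and let (f_j)_{j≥1} be a sequence in F such that the pointwise supremum satisfies sup_{f∈F} f = sup_{j≥1} f_j. For each f ∈ F define the measure μ_f on (S,Σ) by μ_f(A) = ∫_A f dν. Then the supremum measure μ̌ = ⨆_{f∈F} μ_f satisfies μ̌ = ⨆_{j≥1} μ_{f_j}, and for every A ∈ Σ one has μ̌(A) = ∫_A (sup_{f∈F} f) dν. -/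
open MeasureTheory
open scoped ENNReal

private lemma sup_step {S : Type*} [MeasurableSpace S] {ν : Measure S}
    {M : Measure S} {a b : S → ℝ≥0∞} (ha : Measurable a) (hb : Measurable b)
    (hA : ∀ A : Set S, MeasurableSet A → ∫⁻ s in A, a s ∂ν ≤ M A)
    (hB : ∀ A : Set S, MeasurableSet A → ∫⁻ s in A, b s ∂ν ≤ M A) :
    ∀ A : Set S, MeasurableSet A → ∫⁻ s in A, (a s ⊔ b s) ∂ν ≤ M A := by
  intro A hAm
  set B : Set S := A ∩ {s | b s ≤ a s} with hBdef
  have hBm : MeasurableSet B := hAm.inter (measurableSet_le hb ha)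
  have hCm : MeasurableSet (A \ B) := hAm.diff hBm
  have hsplit : ∫⁻ s in A, (a s ⊔ b s) ∂ν
      = ∫⁻ s in B, (a s ⊔ b s) ∂ν + ∫⁻ s in A \ B, (a s ⊔ b s) ∂ν := by
    rw [← lintegral_union hCm Set.disjoint_sdiff_right,
      Set.union_diff_cancel Set.inter_subset_left]
  have h1 : ∫⁻ s in B, (a s ⊔ b s) ∂ν = ∫⁻ s in B, a s ∂ν :=
    setLIntegral_congr_fun hBm (fun s hs =>
      sup_eq_left.2 hs.2)
  have h2 : ∫⁻ s in A \ B, (a s ⊔ b s) ∂ν = ∫⁻ s in A \ B, b s ∂ν := by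
    refine setLIntegral_congr_fun hCm (fun s hs => ?_)
    have : ¬ b s ≤ a s := fun h => hs.2 ⟨hs.1, h⟩
    exact sup_eq_right.2 (le_of_not_ge this)
  calc ∫⁻ s in A, (a s ⊔ b s) ∂ν
      = ∫⁻ s in B, a s ∂ν + ∫⁻ s in A \ B, b s ∂ν := by rw [hsplit, h1, h2]
    _ ≤ M B + M (A \ B) := add_le_add (hA B hBm) (hB _ hCm)
    _ = M (B ∪ (A \ B)) := (measure_union Set.disjoint_sdiff_right hCm).symm
    _ = M A := by rw [Set.union_diff_cancel Set.inter_subset_left]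

/-- If `F` is a nonempty family of measurable `[0,∞]`-valued functions containing a sequence
`f j` whose pointwise supremum equals the pointwise supremum of the whole family, then the
supremum of the associated density measures equals the supremum over the sequence, and on every
measurable set it is given by integrating the pointwise supremum of the family. -/
theorem stmt3 {S : Type*} [MeasurableSpace S] (ν : Measure S)
    (F : Set (S → ℝ≥0∞)) (hne : F.Nonempty) (hmeas : ∀ f ∈ F, Measurable f)
    (f : ℕ → S → ℝ≥0∞) (hmem : ∀ j, f j ∈ F)
    (hsup : ∀ s, (⨆ g ∈ F, g s) = ⨆ j, f j s) :
    (⨆ g ∈ F, ν.withDensity g) = (⨆ j, ν.withDensity (f j)) ∧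
    ∀ A : Set S, MeasurableSet A →
      (⨆ g ∈ F, ν.withDensity g) A = ∫⁻ s in A, (⨆ g ∈ F, g s) ∂ν := by
  -- partial sups
  set h : ℕ → S → ℝ≥0∞ := fun n => Nat.rec (f 0) (fun n hn => hn ⊔ f (n + 1)) n with hdef
  have hmeasf : ∀ j, Measurable (f j) := fun j => hmeas _ (hmem j)
  have hhmeas : ∀ n, Measurable (h n) := by
    intro n; induction n with
    | zero => exact hmeasf 0
    | succ n ih => exact ih.sup (hmeasf (n + 1))
  have hmono : ∀ n s, h n s ≤ h (n + 1) s := fun n s => le_sup_left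
  have hle : ∀ n s, h n s ≤ ⨆ j, f j s := by
    intro n; induction n with
    | zero => exact fun s => le_iSup (fun j => f j s) 0
    | succ n ih => exact fun s => sup_le (ih s) (le_iSup (fun j => f j s) (n + 1))
  have hfh : ∀ j s, f j s ≤ h j s := by
    intro j s; induction j with
    | zero => exact le_rfl
    | succ n ih => exact le_sup_right
  have hsup_h : ∀ s, (⨆ n, h n s) = ⨆ j, f j s := fun s =>
    le_antisymm (iSup_le fun n => hle n s)
      (iSup_le fun j => (hfh j s).trans (le_iSup (fun n => h n s) j))
  set M : Measure S := ⨆ j, ν.withDensity (f j) with hMdef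
  set muInf : Measure S := ν.withDensity (fun s => ⨆ j, f j s) with hμdef
  have hMle : M ≤ muInf :=
    iSup_le fun j => withDensity_mono (Filter.Eventually.of_forall fun s =>
      le_iSup (fun j => f j s) j)
  have hkey : ∀ n, ∀ A : Set S, MeasurableSet A → ∫⁻ s in A, h n s ∂ν ≤ M A := by
    intro n; induction n with
    | zero =>
      intro A hAm
      rw [← withDensity_apply _ hAm]
      exact (le_iSup (fun j => ν.withDensity (f j)) 0) A
    | succ n ih =>
      refine sup_step (hhmeas n) (hmeasf (n + 1)) ih ?_
      intro A hAm
      rw [← withDensity_apply _ hAm]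
      exact (le_iSup (fun j => ν.withDensity (f j)) (n + 1)) A
  have hμM : muInf ≤ M := by
    refine Measure.le_iff.2 fun A hAm => ?_
    rw [hμdef, withDensity_apply _ hAm]
    have : ∫⁻ s in A, (⨆ j, f j s) ∂ν = ⨆ n, ∫⁻ s in A, h n s ∂ν := by
      rw [← lintegral_iSup (fun n => hhmeas n)
        (monotone_nat_of_le_succ fun n s => hmono n s)]
      exact setLIntegral_congr_fun hAm (fun s _ =>
        (hsup_h s).symm)
    rw [this]
    exact iSup_le fun n => hkey n A hAm
  have hMeq : M = muInf := le_antisymm hMle hμM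
  have hF_le : (⨆ g ∈ F, ν.withDensity g) ≤ M := by
    refine iSup₂_le fun g hg => hMeq ▸ withDensity_mono ?_
    refine Filter.Eventually.of_forall fun s => ?_
    calc g s ≤ ⨆ g ∈ F, g s := le_biSup (fun g => g s) hg
      _ = ⨆ j, f j s := hsup s
  have hle_F : M ≤ ⨆ g ∈ F, ν.withDensity g :=
    iSup_le fun j => le_iSup₂_of_le (f j) (hmem j) le_rfl
  have hFeq : (⨆ g ∈ F, ν.withDensity g) = M := le_antisymm hF_le hle_F
  refine ⟨hFeq, fun A hAm => ?_⟩
  rw [hFeq, hMeq, hμdef, withDensity_apply _ hAm]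
  exact setLIntegral_congr_fun hAm (fun s _ => (hsup s).symm)
end

section
/- Let (S,Σ) be a measurable space, let μ_1,…,μ_N be finitely many finite measures on (S,Σ), and let μ̌ = ⨆_{1≤n≤N} μ_n be their supremum measure. Then each μ_n is absolutely continuous with respect to μ̌, and the Radon–Nikodym derivatives satisfy max_{1≤n≤N} (dμ_n/dμ̌)(s) = 1 for μ̌-almost every s ∈ S. -/
open MeasureTheory
open scoped ENNReal

/-- For finitely many finite measures `μ 0, …, μ (N-1)` with supremum measure `⨆ m, μ m`, each
`μ n` is absolutely continuous with respect to the supremum measure, and the maximum of the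
Radon–Nikodym derivatives equals `1` almost everywhere with respect to the supremum measure. -/
theorem stmt4 {S : Type*} [MeasurableSpace S] {N : ℕ} (hN : 0 < N)
    (μ : Fin N → Measure S) [∀ n, IsFiniteMeasure (μ n)] :
    (∀ n, μ n ≪ ⨆ m, μ m) ∧
    ∀ᵐ s ∂(⨆ m, μ m), (⨆ n, (μ n).rnDeriv (⨆ m, μ m) s) = 1 := by
  haveI : Nonempty (Fin N) := ⟨⟨0, hN⟩⟩
  set ν := ⨆ m, μ m with hν
  have hle : ∀ n, μ n ≤ ν := fun n => le_iSup μ n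
  have hac : ∀ n, μ n ≪ ν := fun n => (hle n).absolutelyContinuous
  refine ⟨hac, ?_⟩
  haveI : IsFiniteMeasure ν := by
    constructor
    have hsum : ν ≤ Measure.sum μ := iSup_le fun m => Measure.le_sum μ m
    calc ν Set.univ ≤ (Measure.sum μ) Set.univ := hsum Set.univ
      _ = ∑ n, μ n Set.univ := by
          rw [Measure.sum_apply _ MeasurableSet.univ, tsum_fintype]
      _ < ∞ := ENNReal.sum_lt_top.2 fun n _ => measure_lt_top _ _
  set f : Fin N → S → ℝ≥0∞ := fun n => (μ n).rnDeriv ν with hf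
  set g : S → ℝ≥0∞ := fun s => ⨆ n, f n s with hg
  have hgm : Measurable g := Measurable.iSup fun n => (μ n).measurable_rnDeriv ν
  have h1 : ∀ n, f n ≤ᵐ[ν] 1 := fun n => Measure.rnDeriv_le_one_of_le (hle n)
  have hg1 : g ≤ᵐ[ν] 1 := by
    filter_upwards [ae_all_iff.2 h1] with s hs
    exact iSup_le fun n => hs n
  have hwd : ν.withDensity g = ν := by
    apply le_antisymm
    · calc ν.withDensity g ≤ ν.withDensity 1 := withDensity_mono hg1
        _ = ν := by simp
    · refine iSup_le fun n => ?_
      calc μ n = ν.withDensity (f n) := (Measure.withDensity_rnDeriv_eq _ _ (hac n)).symm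
        _ ≤ ν.withDensity g :=
          withDensity_mono (Filter.Eventually.of_forall fun s => le_iSup (fun n => f n s) n)
  have h2 := Measure.rnDeriv_withDensity ν hgm
  rw [hwd] at h2
  filter_upwards [h2, Measure.rnDeriv_self ν] with s hs1 hs2
  exact (hs1.symm.trans hs2 : g s = 1)
end

section
/- Let X be a reflexive separable real Banach space and let B : X → X* be a bounded linear operator which is self-adjoint (⟨Bx, y⟩ = ⟨By, x⟩ for all x, y ∈ X) and positive (⟨Bx, x⟩ ≥ 0 for all x ∈ X). Then there exist a separable real Hilbert space H and a bounded linear operator B^{1/2} : X → H such that ⟨Bx, y⟩ = ⟨B^{1/2}x, B^{1/2}y⟩_H for all x, y ∈ X (that is, B = (B^{1/2})* B^{1/2}, identifying X** with X by reflexivity). -/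
open scoped RealInnerProductSpace

/-- For a positive self-adjoint bounded operator `B` from a reflexive separable real Banach
space `X` into its dual, there exist a separable real Hilbert space `H` and a bounded operator
`S : X → H` (a square root `B^{1/2}` of `B`) such that `⟨Bx, y⟩ = ⟨Sx, Sy⟩_H` for all `x, y`. -/
theorem stmt6 {X : Type*} [NormedAddCommGroup X] [NormedSpace ℝ X] [CompleteSpace X]
    [TopologicalSpace.SeparableSpace X]
    (hrefl : Function.Surjective (NormedSpace.inclusionInDoubleDual ℝ X))
    (B : X →L[ℝ] (X →L[ℝ] ℝ))
    (hsym : ∀ x y : X, B x y = B y x) (hpos : ∀ x : X, 0 ≤ B x x) :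
    ∃ (H : Type) (_ : NormedAddCommGroup H) (_ : InnerProductSpace ℝ H),
      CompleteSpace H ∧ TopologicalSpace.SeparableSpace H ∧
      ∃ S : X →L[ℝ] H, ∀ x y : X, B x y = ⟪S x, S y⟫ := by
  classical
  have hne : Nonempty X := ⟨0⟩
  obtain ⟨u, hu⟩ := TopologicalSpace.exists_dense_seq X
  let T : (ℕ →₀ ℝ) →ₗ[ℝ] X := Finsupp.linearCombination ℝ u
  letI core : PreInnerProductSpace.Core ℝ (ℕ →₀ ℝ) :=
    { inner := fun f g => B (T f) (T g)
      conj_inner_symm := fun f g => by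
        simp only [starRingEnd_apply, star_trivial]
        exact hsym (T g) (T f)
      re_inner_nonneg := fun f => by simpa using hpos (T f)
      add_left := fun f g h => by simp [map_add]
      smul_left := fun f g r => by simp [map_smul] }
  letI : SeminormedAddCommGroup (ℕ →₀ ℝ) := InnerProductSpace.Core.toSeminormedAddCommGroup (𝕜 := ℝ)
  letI : NormedSpace ℝ (ℕ →₀ ℝ) := InnerProductSpace.Core.toNormedSpace (𝕜 := ℝ)
  letI : InnerProductSpace ℝ (ℕ →₀ ℝ) :=
    InnerProductSpace.ofCore core
  let H : Type := UniformSpace.Completion (SeparationQuotient (ℕ →₀ ℝ))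
  let ψ : (ℕ →₀ ℝ) →L[ℝ] H :=
    (UniformSpace.Completion.toComplL).comp (SeparationQuotient.mkCLM ℝ (ℕ →₀ ℝ))
  have hψ : ∀ f : ℕ →₀ ℝ, ψ f
      = ((SeparationQuotient.mk f : SeparationQuotient (ℕ →₀ ℝ)) : H) := fun f => rfl
  have hinnerF : ∀ f g : ℕ →₀ ℝ, ⟪f, g⟫ = B (T f) (T g) := fun f g => rfl
  have hψinner : ∀ f g : ℕ →₀ ℝ, ⟪ψ f, ψ g⟫ = B (T f) (T g) := by
    intro f g
    rw [hψ f, hψ g, UniformSpace.Completion.inner_coe]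
    rfl
  have hnormF : ∀ f : ℕ →₀ ℝ, ‖f‖ = Real.sqrt (B (T f) (T f)) := by
    intro f
    rw [@norm_eq_sqrt_real_inner (ℕ →₀ ℝ) _ _ f, hinnerF]
  have hnorm : ∀ f : ℕ →₀ ℝ, ‖ψ f‖ = Real.sqrt (B (T f) (T f)) := by
    intro f
    rw [hψ f, UniformSpace.Completion.norm_coe, SeparationQuotient.norm_mk, hnormF]
  have hker : LinearMap.ker T ≤ LinearMap.ker (ψ.toLinearMap) := by
    intro f hf
    have hf' : T f = 0 := hf
    have h0 : ‖ψ f‖ = 0 := by rw [hnorm, hf']; simp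
    simpa [LinearMap.mem_ker] using norm_eq_zero.mp h0
  let g : ((ℕ →₀ ℝ) ⧸ LinearMap.ker T) →ₗ[ℝ] H := Submodule.liftQ _ ψ.toLinearMap hker
  let f₀ : (LinearMap.range T) →ₗ[ℝ] H :=
    g ∘ₗ (T.quotKerEquivRange.symm : LinearMap.range T ≃ₗ[ℝ] _).toLinearMap
  have hf₀ : ∀ a : ℕ →₀ ℝ, f₀ ⟨T a, LinearMap.mem_range_self T a⟩ = ψ a := by
    intro a
    show g (T.quotKerEquivRange.symm ⟨T a, LinearMap.mem_range_self T a⟩) = ψ a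
    rw [LinearMap.quotKerEquivRange_symm_apply_image]
    exact Submodule.liftQ_apply _ _ _
  have hb : ∀ y : LinearMap.range T, ‖f₀ y‖ ≤ Real.sqrt ‖B‖ * ‖y‖ := by
    rintro ⟨y, hy⟩
    obtain ⟨a, rfl⟩ := hy
    have hy' : (⟨T a, ⟨a, rfl⟩⟩ : LinearMap.range T)
        = ⟨T a, LinearMap.mem_range_self T a⟩ := rfl
    rw [hy', hf₀, hnorm]
    have h1 : B (T a) (T a) ≤ ‖B‖ * ‖T a‖ * ‖T a‖ := by
      calc B (T a) (T a) ≤ ‖B (T a) (T a)‖ := le_abs_self _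
        _ ≤ ‖B‖ * ‖T a‖ * ‖T a‖ := B.le_opNorm₂ (T a) (T a)
    have h2 : ‖(⟨T a, LinearMap.mem_range_self T a⟩ : LinearMap.range T)‖ = ‖T a‖ := rfl
    rw [h2]
    calc Real.sqrt (B (T a) (T a)) ≤ Real.sqrt (‖B‖ * (‖T a‖ * ‖T a‖)) := by
          apply Real.sqrt_le_sqrt; linarith
      _ = Real.sqrt ‖B‖ * ‖T a‖ := by
          rw [Real.sqrt_mul (norm_nonneg B), Real.sqrt_mul_self (norm_nonneg (T a))]
  let fc : (LinearMap.range T) →L[ℝ] H := f₀.mkContinuous (Real.sqrt ‖B‖) hb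
  have hrange : Set.range u ⊆ ((LinearMap.range T : Submodule ℝ X) : Set X) := by
    rintro - ⟨n, rfl⟩
    exact ⟨Finsupp.single n 1, by simp [T]⟩
  have hdense : DenseRange ((LinearMap.range T).subtypeL : LinearMap.range T →L[ℝ] X) := by
    have : Dense ((LinearMap.range T : Submodule ℝ X) : Set X) := hu.mono hrange
    show Dense (Set.range (Subtype.val : LinearMap.range T → X)); rwa [Subtype.range_coe]
  have hui : IsUniformInducing ((LinearMap.range T).subtypeL : LinearMap.range T →L[ℝ] X) :=
    isometry_subtype_coe.isUniformInducing
  let S : X →L[ℝ] H := fc.extend (LinearMap.range T).subtypeL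
  refine ⟨H, inferInstance, inferInstance, inferInstance, ?_, S, ?_⟩
  · -- separability
    rw [← TopologicalSpace.isSeparable_univ_iff]
    have hdr : DenseRange (ψ : (ℕ →₀ ℝ) → H) := by
      have h1 : DenseRange ((↑) : SeparationQuotient (ℕ →₀ ℝ) → H) :=
        UniformSpace.Completion.denseRange_coe
      have h2 : DenseRange (SeparationQuotient.mk : (ℕ →₀ ℝ) → SeparationQuotient (ℕ →₀ ℝ)) :=
        SeparationQuotient.surjective_mk.denseRange
      exact h1.comp h2 (UniformSpace.Completion.continuous_coe _)
    have hsub : Set.range (ψ : (ℕ →₀ ℝ) → H)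
        ⊆ (Submodule.span ℝ (Set.range fun n => ψ (Finsupp.single n (1 : ℝ))) : Set H) := by
      rintro - ⟨f, rfl⟩
      have hf : f ∈ Submodule.span ℝ (Set.range fun n => Finsupp.single n (1 : ℝ)) := by
        have hsp := (Finsupp.basisSingleOne (R := ℝ) (ι := ℕ)).span_eq
        rw [Finsupp.coe_basisSingleOne] at hsp
        rw [hsp]; trivial
      have := Submodule.apply_mem_span_image_of_mem_span (ψ.toLinearMap) hf
      rwa [← Set.range_comp] at this
    have hc : TopologicalSpace.IsSeparable
        (Submodule.span ℝ (Set.range fun n => ψ (Finsupp.single n (1 : ℝ))) : Set H) :=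
      (Set.countable_range _).isSeparable.span
    refine (hc.closure).mono ?_
    have : closure (Set.range (ψ : (ℕ →₀ ℝ) → H)) = Set.univ := hdr.closure_range
    rw [← this]
    exact closure_mono hsub
  · -- the inner product identity
    intro x y
    refine DenseRange.induction_on₂ hdense ?_ ?_ x y
    · apply isClosed_eq
      · exact B.continuous₂
      · exact Continuous.inner (S.continuous.comp continuous_fst)
          (S.continuous.comp continuous_snd)
    · intro a b
      have hS : ∀ c : LinearMap.range T, S (c : X) = fc c := fun c =>
        ContinuousLinearMap.extend_eq fc hdense hui c
      show (B (a : X)) (b : X) = ⟪S (a : X), S (b : X)⟫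
      rw [hS a, hS b]
      obtain ⟨p, hp⟩ := a.2
      obtain ⟨q, hq⟩ := b.2
      have ha : a = ⟨T p, LinearMap.mem_range_self T p⟩ := Subtype.ext hp.symm
      have hbq : b = ⟨T q, LinearMap.mem_range_self T q⟩ := Subtype.ext hq.symm
      rw [ha, hbq]
      show B (T p) (T q) = ⟪fc _, fc _⟫
      rw [show fc ⟨T p, LinearMap.mem_range_self T p⟩ = ψ p from hf₀ p,
        show fc ⟨T q, LinearMap.mem_range_self T q⟩ = ψ q from hf₀ q, hψinner]
end

section
/- Let H be a real Hilbert space, let H₀ ⊆ H be a finite-dimensional subspace, and let F : H → H be a bounded self-adjoint operator with ⟨Fh, h⟩ ≥ 0 for all h ∈ H. Let P denote the orthogonal projection of H onto the (finite-dimensional, hence closed) subspace F(H₀). Then there exist bounded linear operators P̃ and L on H such that P̃ ∘ F = F ∘ P, P̃ ∘ P̃ = P̃ (P̃ is a projection), and L ∘ F = P. -/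
open scoped RealInnerProductSpace

/-- For a positive self-adjoint bounded operator `F` on a real Hilbert space `H` and a
finite-dimensional subspace `H₀`, with `P` the orthogonal projection onto `F(H₀)`, there exist
bounded operators `P̃` and `L` on `H` with `P̃ ∘ F = F ∘ P`, `P̃` a projection, and `L ∘ F = P`. -/
theorem stmt8 {H : Type*} [NormedAddCommGroup H] [InnerProductSpace ℝ H] [CompleteSpace H]
    (H₀ : Submodule ℝ H) [FiniteDimensional ℝ H₀]
    (F : H →L[ℝ] H)
    (hsa : ∀ h g : H, ⟪F h, g⟫ = ⟪F g, h⟫)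
    (hpos : ∀ h : H, 0 ≤ ⟪F h, h⟫) :
    ∃ Pt L : H →L[ℝ] H,
      (∀ h, Pt (F h) = F ((Submodule.map (F : H →ₗ[ℝ] H) H₀).subtypeL
          (Submodule.orthogonalProjectionOnto (Submodule.map (F : H →ₗ[ℝ] H) H₀) h))) ∧
      (∀ h, Pt (Pt h) = Pt h) ∧
      (∀ h, L (F h) = (Submodule.map (F : H →ₗ[ℝ] H) H₀).subtypeL
          (Submodule.orthogonalProjectionOnto (Submodule.map (F : H →ₗ[ℝ] H) H₀) h)) := by
  classical
  set K : Submodule ℝ H := Submodule.map (F : H →ₗ[ℝ] H) H₀ with hKdef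
  haveI : FiniteDimensional ℝ K := Module.Finite.map H₀ (F : H →ₗ[ℝ] H)
  set N : Submodule ℝ H := H₀ ⊓ LinearMap.ker (F : H →ₗ[ℝ] H) with hNdef
  haveI : FiniteDimensional ℝ N := Submodule.finiteDimensional_of_le inf_le_left
  set H₁ : Submodule ℝ H := H₀ ⊓ Nᗮ with hH₁def
  haveI : FiniteDimensional ℝ H₁ := Submodule.finiteDimensional_of_le inf_le_left
  set PK : H →L[ℝ] H := K.subtypeL.comp (Submodule.orthogonalProjectionOnto K) with hPKdef
  -- PK is idempotent
  have hPKmem : ∀ x, PK x ∈ K := fun x => (Submodule.orthogonalProjectionOnto K x).2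
  have hPK2 : ∀ x, PK (PK x) = PK x := by
    intro x
    have : Submodule.orthogonalProjectionOnto K ((Submodule.orthogonalProjectionOnto K x : H)) =
        Submodule.orthogonalProjectionOnto K x := Submodule.orthogonalProjectionOnto_mem_subspace_eq_self _
    rw [hPKdef]; exact congrArg Subtype.val this
  -- x - PK x is orthogonal to K
  have hPKorth : ∀ x, x - PK x ∈ Kᗮ := fun x => Submodule.sub_starProjection_mem_orthogonal x
  -- the compression of F∘F to H₁
  set T₁ : H₁ →ₗ[ℝ] H₁ :=
    ((Submodule.orthogonalProjectionOnto H₁).toLinearMap.comp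
      ((F : H →ₗ[ℝ] H).comp ((F : H →ₗ[ℝ] H).comp H₁.subtype))) with hT₁def
  have hT₁apply : ∀ v : H₁, T₁ v = Submodule.orthogonalProjectionOnto H₁ (F (F (v : H))) := fun v => rfl
  -- T₁ is injective
  have hT₁inj : Function.Injective T₁ := by
    rw [← LinearMap.ker_eq_bot, LinearMap.ker_eq_bot']
    intro v hv
    have hv1 : (v : H) ∈ H₁ := v.2
    have hFFv : ⟪F (F (v : H)), (v : H)⟫ = 0 := by
      have horth : F (F (v : H)) - (Submodule.orthogonalProjectionOnto H₁ (F (F (v : H))) : H) ∈ H₁ᗮ :=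
        Submodule.sub_starProjection_mem_orthogonal _
      have h0 : (Submodule.orthogonalProjectionOnto H₁ (F (F (v : H))) : H) = 0 := by
        rw [← hT₁apply v, hv]; rfl
      have := horth (v : H) hv1
      rw [h0, sub_zero] at this
      rw [real_inner_comm]; exact this
    have hFv : F (v : H) = 0 := by
      have : ⟪F (v : H), F (v : H)⟫ = 0 := by rw [← hsa (F (v : H)) (v : H)]; exact hFFv
      exact inner_self_eq_zero.mp this
    have hvN : (v : H) ∈ N := ⟨v.2.1, by simpa using hFv⟩
    have hvNo : (v : H) ∈ Nᗮ := v.2.2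
    have : (v : H) = 0 := by
      have := hvNo (v : H) hvN
      rw [real_inner_comm] at this
      exact inner_self_eq_zero.mp this
    exact Subtype.ext this
  have hT₁surj : Function.Surjective T₁ :=
    (LinearMap.injective_iff_surjective).mp hT₁inj
  set e : H₁ ≃ₗ[ℝ] H₁ := LinearEquiv.ofBijective T₁ ⟨hT₁inj, hT₁surj⟩ with hedef
  have he : ∀ v : H₁, e.symm (T₁ v) = v := fun v => e.symm_apply_apply v
  -- the operator L
  set Lfin : H₁ →ₗ[ℝ] H := (F : H →ₗ[ℝ] H).comp (H₁.subtype.comp (e.symm : H₁ →ₗ[ℝ] H₁))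
    with hLfindef
  set L : H →L[ℝ] H :=
    (LinearMap.toContinuousLinearMap Lfin).comp (Submodule.orthogonalProjectionOnto H₁) with hLdef
  have hLapply : ∀ x, L x = F ((e.symm (Submodule.orthogonalProjectionOnto H₁ x) : H)) := fun x => rfl
  -- every element of K is F of something in H₁
  have hKH₁ : ∀ k ∈ K, ∃ u : H₁, F (u : H) = k := by
    intro k hk
    obtain ⟨v, hv, hFv⟩ := hk
    refine ⟨⟨v - (Submodule.orthogonalProjectionOnto N v : H), ?_, ?_⟩, ?_⟩
    · exact H₀.sub_mem hv (Submodule.orthogonalProjectionOnto N v).2.1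
    · exact Submodule.sub_starProjection_mem_orthogonal v
    · have hker : F ((Submodule.orthogonalProjectionOnto N v : H)) = 0 := by
        have := (Submodule.orthogonalProjectionOnto N v).2.2
        simpa using this
      simp only [map_sub, hker, sub_zero]
      exact hFv
  -- key identity : L (F h) = PK h
  have hLF : ∀ h, L (F h) = PK h := by
    intro h
    obtain ⟨u, hu⟩ := hKH₁ (PK h) (hPKmem h)
    -- F h - F (PK h) ∈ H₁ᗮ
    have horth : F h - F (PK h) ∈ H₁ᗮ := by
      intro w hw
      have hFwK : F w ∈ K := ⟨w, hw.1, rfl⟩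
      have : ⟪F w, h - PK h⟫ = 0 := by
        have := hPKorth h
        rw [Submodule.mem_orthogonal] at this
        exact this (F w) hFwK
      calc ⟪w, F h - F (PK h)⟫ = ⟪F (h - PK h), w⟫ := by
            rw [real_inner_comm, map_sub]
        _ = ⟪F w, h - PK h⟫ := hsa _ _
        _ = 0 := this
    have hproj : Submodule.orthogonalProjectionOnto H₁ (F h) = Submodule.orthogonalProjectionOnto H₁ (F (PK h)) := by
      have h0 : Submodule.orthogonalProjectionOnto H₁ (F h - F (PK h)) = 0 :=
        Submodule.orthogonalProjectionOnto_apply_of_mem_orthogonal horth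
      have := map_sub (Submodule.orthogonalProjectionOnto H₁) (F h) (F (PK h))
      rw [h0] at this
      exact sub_eq_zero.mp this.symm
    rw [hLapply]
    have hT₁u : T₁ u = Submodule.orthogonalProjectionOnto H₁ (F h) := by
      rw [hT₁apply, hu, hproj]
    rw [← hT₁u, he, hu]
  -- define Pt
  refine ⟨(F.comp PK).comp L, L, ?_, ?_, ?_⟩
  · intro h
    show F (PK (L (F h))) = F (PK h)
    rw [hLF, hPK2]
  · intro h
    show F (PK (L (F (PK (L h))))) = F (PK (L h))
    rw [hLF, hPK2, hPK2]
  · intro h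
    exact hLF h
end

section
/- Let (S,Σ) be a measurable space, let H be a separable real Hilbert space, and let H₀ ⊆ H be a finite-dimensional subspace. Let F : S → 𝓛(H) be a function with values in the bounded operators on H such that (i) for every h ∈ H the map s ↦ F(s)h is strongly measurable, and (ii) for every s ∈ S, F(s) is self-adjoint and ⟨F(s)h, h⟩ ≥ 0 for all h ∈ H. For each s ∈ S let P(s) be the orthogonal projection of H onto F(s)(H₀). Then there exist functions P̃, L : S → 𝓛(H) such that for every h ∈ H the maps s ↦ P̃(s)h and s ↦ L(s)h are strongly measurable, and for every s ∈ S one has P̃(s) ∘ F(s) = F(s) ∘ P(s), L(s) ∘ F(s) = P(s), and P̃(s) ∘ P̃(s) = P̃(s). -/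
open MeasureTheory Filter Topology
open scoped RealInnerProductSpace Matrix

namespace Stmt9Aux

variable {n : Type*} [Fintype n] [DecidableEq n]

/-- Moore–Penrose pseudoinverse of a real symmetric matrix (0 otherwise). -/
noncomputable def mpinv (G : Matrix n n ℝ) : Matrix n n ℝ :=
  if h : G.IsHermitian then
    (h.eigenvectorUnitary : Matrix n n ℝ) * Matrix.diagonal (fun i => (h.eigenvalues i)⁻¹) *
      (star (h.eigenvectorUnitary : Matrix n n ℝ))
  else 0

lemma spectral (G : Matrix n n ℝ) (h : G.IsHermitian) :
    G = (h.eigenvectorUnitary : Matrix n n ℝ) * Matrix.diagonal (fun i => h.eigenvalues i) *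
      (star (h.eigenvectorUnitary : Matrix n n ℝ)) := by
  have := h.spectral_theorem
  simpa using this

lemma star_mul_U (G : Matrix n n ℝ) (h : G.IsHermitian) :
    (star (h.eigenvectorUnitary : Matrix n n ℝ)) * (h.eigenvectorUnitary : Matrix n n ℝ) = 1 := by
  exact (Matrix.mem_unitaryGroup_iff').mp (h.eigenvectorUnitary).2

/-- Abstract spectral data for a symmetric matrix, with the pseudoinverse in the same frame. -/
lemma exists_spectral (G : Matrix n n ℝ) (h : G.IsHermitian) :
    ∃ (U : Matrix n n ℝ) (d : n → ℝ),
      star U * U = 1 ∧ U * star U = 1 ∧ G = U * Matrix.diagonal d * star U ∧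
      mpinv G = U * Matrix.diagonal (fun i => (d i)⁻¹) * star U ∧
      (G.PosSemidef → ∀ i, 0 ≤ d i) := by
  refine ⟨_, _, star_mul_U G h, (Matrix.mem_unitaryGroup_iff).mp (h.eigenvectorUnitary).2,
    spectral G h, by rw [mpinv, dif_pos h], fun hp i => hp.eigenvalues_nonneg i⟩

lemma sandwich (U : Matrix n n ℝ) (hU : star U * U = 1) (d e f : n → ℝ) :
    (U * Matrix.diagonal d * star U) * (U * Matrix.diagonal e * star U) *
      (U * Matrix.diagonal f * star U) =
    U * Matrix.diagonal (fun i => d i * e i * f i) * star U := by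
  have : U * Matrix.diagonal d * star U * (U * Matrix.diagonal e * star U) *
      (U * Matrix.diagonal f * star U) =
      U * (Matrix.diagonal d * (star U * U) * Matrix.diagonal e * (star U * U) *
        Matrix.diagonal f) * star U := by noncomm_ring
  rw [this, hU]
  simp [Matrix.diagonal_mul_diagonal]

lemma mpinv_GGG (G : Matrix n n ℝ) (h : G.IsHermitian) : G * mpinv G * G = G := by
  obtain ⟨U, d, hU, hU', hspec, hmp, -⟩ := exists_spectral G h
  rw [hmp]
  conv_lhs => rw [hspec, sandwich U hU]
  conv_rhs => rw [hspec]
  congr 2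
  ext i
  rcases eq_or_ne (d i) 0 with h0 | h0
  · simp [h0]
  · field_simp

end Stmt9Aux

namespace Stmt9Aux2
open Stmt9Aux

variable {n : Type*} [Fintype n] [DecidableEq n]

instance matrixMS : MeasurableSpace (Matrix n n ℝ) := by unfold Matrix; infer_instance

instance matrixBS : BorelSpace (Matrix n n ℝ) := by
  constructor
  exact (Pi.borelSpace (X := fun _ : n => n → ℝ)).measurable_eq

lemma tendsto_mpinv {G : Matrix n n ℝ} (hpsd : G.PosSemidef) :
    Tendsto (fun k : ℕ => (G + ((k:ℝ)+1)⁻¹ • 1)⁻¹ * (G + ((k:ℝ)+1)⁻¹ • 1)⁻¹ * G)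
      atTop (𝓝 (mpinv G)) := by
  obtain ⟨U, d, hU, hU', hspec, hmp, hdn⟩ := exists_spectral G hpsd.1
  have hd0 := hdn hpsd
  have hone : ∀ ε : ℝ, ε • (1 : Matrix n n ℝ) = U * Matrix.diagonal (fun _ => ε) * star U := by
    intro ε
    have h2 : U * Matrix.diagonal (fun _ => ε) * star U = U * (ε • (1:Matrix n n ℝ)) * star U := by
      rw [Matrix.smul_one_eq_diagonal]
    rw [h2, mul_smul_comm, mul_one, smul_mul_assoc, hU']
  have hsum : ∀ ε : ℝ, G + ε • 1 = U * Matrix.diagonal (fun i => d i + ε) * star U := by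
    intro ε
    conv_lhs => rw [hspec, hone ε]
    rw [← Matrix.add_mul, ← Matrix.mul_add, Matrix.diagonal_add]
  have hinv : ∀ ε : ℝ, 0 < ε →
      (G + ε • 1)⁻¹ = U * Matrix.diagonal (fun i => (d i + ε)⁻¹) * star U := by
    intro ε hε
    rw [hsum ε]
    apply Matrix.inv_eq_right_inv
    have : U * Matrix.diagonal (fun i => d i + ε) * star U *
        (U * Matrix.diagonal (fun i => (d i + ε)⁻¹) * star U) =
        U * (Matrix.diagonal (fun i => d i + ε) * (star U * U) *
          Matrix.diagonal (fun i => (d i + ε)⁻¹)) * star U := by noncomm_ring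
    rw [this, hU, mul_one, Matrix.diagonal_mul_diagonal]
    have hne : ∀ i, d i + ε ≠ 0 := fun i => by have := hd0 i; intro h; linarith
    have : (fun i => (d i + ε) * (d i + ε)⁻¹) = fun _ => (1:ℝ) := by
      funext i; exact mul_inv_cancel₀ (hne i)
    rw [this, Matrix.diagonal_one, mul_one, hU']
  have key : ∀ k : ℕ, (G + ((k:ℝ)+1)⁻¹ • 1)⁻¹ * (G + ((k:ℝ)+1)⁻¹ • 1)⁻¹ * G =
      U * Matrix.diagonal
        (fun i => (d i + ((k:ℝ)+1)⁻¹)⁻¹ * (d i + ((k:ℝ)+1)⁻¹)⁻¹ * d i) * star U := by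
    intro k
    have hε : (0:ℝ) < ((k:ℝ)+1)⁻¹ := by positivity
    rw [hinv _ hε]
    conv_lhs => rw [hspec, sandwich U hU]
  rw [funext key, hmp]
  have hε0 : Tendsto (fun k : ℕ => ((k:ℝ)+1)⁻¹) atTop (𝓝 0) := by
    simpa [one_div] using tendsto_one_div_add_atTop_nhds_zero_nat (𝕜 := ℝ)
  have hdiag : Tendsto
      (fun k : ℕ => (fun i => (d i + ((k:ℝ)+1)⁻¹)⁻¹ * (d i + ((k:ℝ)+1)⁻¹)⁻¹ * d i))
      atTop (𝓝 (fun i => (d i)⁻¹)) := by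
    rw [tendsto_pi_nhds]
    intro i
    rcases eq_or_lt_of_le (hd0 i) with h0 | h0
    · simpa [← h0] using tendsto_const_nhds (x := (0:ℝ)) (f := atTop (α := ℕ))
    · have hne : d i ≠ 0 := ne_of_gt h0
      have h1 : Tendsto (fun k : ℕ => (d i + ((k:ℝ)+1)⁻¹)⁻¹) atTop (𝓝 (d i)⁻¹) := by
        have := (tendsto_const_nhds (x := d i) (f := atTop (α := ℕ))).add hε0
        rw [add_zero] at this
        exact this.inv₀ hne
      have := (h1.mul h1).mul (tendsto_const_nhds (x := d i) (f := atTop (α := ℕ)))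
      have heq : (d i)⁻¹ * (d i)⁻¹ * d i = (d i)⁻¹ := by field_simp
      rwa [heq] at this
  have hdiagc : Continuous (Matrix.diagonal : (n → ℝ) → Matrix n n ℝ) :=
    continuous_id.matrix_diagonal
  exact (tendsto_const_nhds.mul (((hdiagc.tendsto _).comp hdiag))).mul tendsto_const_nhds

lemma measurable_matrix_inv :
    Measurable (fun A : Matrix n n ℝ => A⁻¹) := by
  have : (fun A : Matrix n n ℝ => A⁻¹) =
      fun A => (Ring.inverse A.det) • A.adjugate := by
    funext A; rw [Matrix.inv_def]
  rw [this, Ring.inverse_eq_inv']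
  exact ((continuous_id.matrix_det.measurable).inv).smul
    continuous_id.matrix_adjugate.measurable

lemma measurable_mul_matrix {S : Type*} [MeasurableSpace S] {A B : S → Matrix n n ℝ}
    (hA : Measurable A) (hB : Measurable B) : Measurable (fun s => A s * B s) := by
  apply measurable_pi_lambda; intro i
  apply measurable_pi_lambda; intro j
  simp only [Matrix.mul_apply]
  exact Finset.measurable_sum _ fun k _ => (hA.eval.eval.mul hB.eval.eval)

end Stmt9Aux2

namespace Stmt9Aux2
open Stmt9Aux

variable {n : Type*} [Fintype n] [DecidableEq n]

instance : TopologicalSpace.PseudoMetrizableSpace (Matrix n n ℝ) := by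
  exact inferInstanceAs (TopologicalSpace.PseudoMetrizableSpace (n → n → ℝ))

lemma measurable_mpinv {S : Type*} [MeasurableSpace S] {G : S → Matrix n n ℝ}
    (hG : Measurable G) (hpsd : ∀ s, (G s).PosSemidef) :
    Measurable fun s => mpinv (G s) := by
  apply measurable_of_tendsto_metrizable
    (f := fun k s => (G s + ((k:ℝ)+1)⁻¹ • 1)⁻¹ * (G s + ((k:ℝ)+1)⁻¹ • 1)⁻¹ * (G s))
  · intro k
    have h1 : Measurable fun s => G s + ((k:ℝ)+1)⁻¹ • (1 : Matrix n n ℝ) := by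
      apply measurable_pi_lambda; intro i
      apply measurable_pi_lambda; intro j
      exact (hG.eval.eval).add_const _
    exact measurable_mul_matrix
      (measurable_mul_matrix (measurable_matrix_inv.comp h1) (measurable_matrix_inv.comp h1)) hG
  · rw [tendsto_pi_nhds]
    intro s
    exact tendsto_mpinv (hpsd s)

end Stmt9Aux2

namespace Stmt9Aux3
open Stmt9Aux MeasureTheory

lemma sm_comp {S : Type*} [MeasurableSpace S] {H : Type*} [NormedAddCommGroup H]
    [NormedSpace ℝ H] (F : S → H →L[ℝ] H) (hmeas : ∀ h, StronglyMeasurable fun s => F s h)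
    {g : S → H} (hg : StronglyMeasurable g) : StronglyMeasurable fun s => F s (g s) := by
  have hsimple : ∀ φ : SimpleFunc S H, StronglyMeasurable fun s => F s (φ s) := by
    intro φ
    induction φ using SimpleFunc.induction with
    | @const c sSet hs =>
      have : (fun s' => F s' ((SimpleFunc.piecewise sSet hs (SimpleFunc.const _ c)
          (SimpleFunc.const _ 0)) s')) = Set.indicator sSet (fun s' => F s' c) := by
        funext s'
        by_cases h : s' ∈ sSet
        · simp [SimpleFunc.piecewise_apply, h, Set.indicator_of_mem]
        · simp [SimpleFunc.piecewise_apply, h, Set.indicator_of_notMem]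
      rw [this]
      exact (hmeas c).indicator hs
    | @add f g hdisj hf hg =>
      have : (fun s' => F s' ((f + g) s')) =
          fun s' => F s' (f s') + F s' (g s') := by
        funext s'; simp
      rw [this]
      exact hf.add hg
  refine stronglyMeasurable_of_tendsto atTop (fun n => hsimple (hg.approx n)) ?_
  rw [tendsto_pi_nhds]
  intro s
  exact ((F s).continuous.tendsto _).comp (hg.tendsto_approx s)

end Stmt9Aux3

open Stmt9Aux Stmt9Aux2 Stmt9Aux3

/-- Measurable-selection version: for an `H`-strongly measurable family `F s` of positive
self-adjoint operators on a separable real Hilbert space `H` and a finite-dimensional subspace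
`H₀`, with `P s` the orthogonal projection onto `F(s)(H₀)`, there exist `H`-strongly measurable
families `P̃ s` and `L s` with `P̃ s ∘ F s = F s ∘ P s`, `L s ∘ F s = P s`, and each `P̃ s` a
projection. -/
theorem stmt9 {S : Type*} [MeasurableSpace S] {H : Type*} [NormedAddCommGroup H]
    [InnerProductSpace ℝ H] [CompleteSpace H] [SecondCountableTopology H]
    (H₀ : Submodule ℝ H) [FiniteDimensional ℝ H₀]
    (F : S → H →L[ℝ] H)
    (hmeas : ∀ h : H, StronglyMeasurable fun s => F s h)
    (hsa : ∀ s, ∀ h g : H, ⟪F s h, g⟫ = ⟪F s g, h⟫)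
    (hpos : ∀ s, ∀ h : H, 0 ≤ ⟪F s h, h⟫) :
    ∃ Pt L : S → H →L[ℝ] H,
      (∀ h : H, StronglyMeasurable fun s => Pt s h) ∧
      (∀ h : H, StronglyMeasurable fun s => L s h) ∧
      (∀ s, ∀ h, Pt s (F s h) = F s ((Submodule.map (F s : H →ₗ[ℝ] H) H₀).subtypeL
          (Submodule.orthogonalProjectionOnto (Submodule.map (F s : H →ₗ[ℝ] H) H₀) h))) ∧
      (∀ s, ∀ h, L s (F s h) = (Submodule.map (F s : H →ₗ[ℝ] H) H₀).subtypeL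
          (Submodule.orthogonalProjectionOnto (Submodule.map (F s : H →ₗ[ℝ] H) H₀) h)) ∧
      (∀ s, ∀ h, Pt s (Pt s h) = Pt s h) := by
  classical
  set N := Module.finrank ℝ H₀ with hN
  let b : OrthonormalBasis (Fin N) ℝ H₀ := stdOrthonormalBasis ℝ H₀
  let v : Fin N → H := fun i => (b i : H)
  let w : S → Fin N → H := fun s i => F s (v i)
  let G : S → Matrix (Fin N) (Fin N) ℝ := fun s => Matrix.of fun i j => ⟪w s i, w s j⟫
  have hvH₀ : ∀ i, v i ∈ H₀ := fun i => (b i).2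
  have hwK : ∀ s i, w s i ∈ Submodule.map (F s : H →ₗ[ℝ] H) H₀ :=
    fun s i => ⟨v i, hvH₀ i, rfl⟩
  -- dot product identity
  have hdot : ∀ s (x : Fin N → ℝ),
      x ⬝ᵥ (G s *ᵥ x) = ⟪∑ i, x i • w s i, ∑ j, x j • w s j⟫ := by
    intro s x
    simp only [dotProduct, Matrix.mulVec, dotProduct, G, Matrix.of_apply]
    rw [sum_inner]
    refine Finset.sum_congr rfl fun i _ => ?_
    rw [real_inner_smul_left, inner_sum, Finset.mul_sum, Finset.mul_sum]
    refine Finset.sum_congr rfl fun j _ => ?_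
    rw [real_inner_smul_right]
    ring
  have hpsd : ∀ s, (G s).PosSemidef := by
    intro s
    refine Matrix.PosSemidef.of_dotProduct_mulVec_nonneg ?_ ?_
    · ext i j
      simp only [Matrix.conjTranspose_apply, Matrix.of_apply, G, star_trivial]
      exact real_inner_comm _ _
    · intro x
      have : star x ⬝ᵥ (G s *ᵥ x) = x ⬝ᵥ (G s *ᵥ x) := by
        simp [dotProduct]
      rw [this, hdot s x]
      exact real_inner_self_nonneg
  have hGmeas : Measurable G := by
    apply measurable_pi_lambda; intro i
    apply measurable_pi_lambda; intro j
    exact ((hmeas (v i)).inner (hmeas (v j))).measurable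
  have hm : Measurable fun s => mpinv (G s) := measurable_mpinv hGmeas hpsd
  -- the operators
  let L : S → H →L[ℝ] H := fun s =>
    ∑ i, ∑ j, (mpinv (G s) i j) • ((innerSL ℝ (v j)).smulRight (w s i))
  let Pt : S → H →L[ℝ] H := fun s =>
    ∑ i, ∑ j, (mpinv (G s) i j) • ((innerSL ℝ (v j)).smulRight (F s (w s i)))
  have hLapp : ∀ s x, L s x =
      ∑ i, (mpinv (G s) *ᵥ (fun j => ⟪v j, x⟫)) i • w s i := by
    intro s x
    simp only [L, ContinuousLinearMap.sum_apply, ContinuousLinearMap.smul_apply,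
      ContinuousLinearMap.smulRight_apply, innerSL_apply_apply, Matrix.mulVec, dotProduct]
    refine Finset.sum_congr rfl fun i _ => ?_
    rw [Finset.sum_smul]
    refine Finset.sum_congr rfl fun j _ => ?_
    rw [smul_smul]
  have hPtF : ∀ s x, Pt s x = F s (L s x) := by
    intro s x
    simp only [L, Pt, ContinuousLinearMap.sum_apply, ContinuousLinearMap.smul_apply,
      ContinuousLinearMap.smulRight_apply, innerSL_apply_apply, map_sum, _root_.map_smul]
  have hLmem : ∀ s x, L s x ∈ Submodule.map (F s : H →ₗ[ℝ] H) H₀ := by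
    intro s x
    rw [hLapp]
    exact Submodule.sum_mem _ fun i _ => Submodule.smul_mem _ _ (hwK s i)
  -- the key identity
  have hkey : ∀ s (h : H), L s (F s h) =
      (Submodule.map (F s : H →ₗ[ℝ] H) H₀).subtypeL
        (Submodule.orthogonalProjectionOnto (Submodule.map (F s : H →ₗ[ℝ] H) H₀) h) := by
    intro s h
    set K := Submodule.map (F s : H →ₗ[ℝ] H) H₀ with hK
    set p : H := (Submodule.orthogonalProjectionOnto K h : H) with hp
    have hpK : p ∈ K := (Submodule.orthogonalProjectionOnto K h).2
    obtain ⟨y, hy, hyp⟩ := hpK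
    set yH : H₀ := ⟨y, hy⟩ with hyH
    set a : Fin N → ℝ := fun i => ⟪b i, yH⟫ with ha
    have hyrep : (∑ i, a i • b i) = yH := b.sum_repr' yH
    have hprep : p = ∑ i, a i • w s i := by
      rw [← hyp]
      have : y = ((∑ i, a i • b i : H₀) : H) := by rw [hyrep]
      rw [this]
      push_cast
      simp only [map_sum, _root_.map_smul]
      rfl
    -- coefficients of F s h
    have hc : (fun j => ⟪v j, F s h⟫) = G s *ᵥ a := by
      funext j
      have h1 : ⟪v j, F s h⟫ = ⟪w s j, h⟫ := by
        rw [real_inner_comm, hsa s h (v j), real_inner_comm]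
      have h2 : ⟪w s j, h⟫ = ⟪w s j, p⟫ := by
        have horth : h - p ∈ Kᗮ := Submodule.sub_starProjection_mem_orthogonal (K := K) h
        have h3 := (Submodule.mem_orthogonal K (h - p)).mp horth (w s j) (hwK s j)
        rw [inner_sub_right] at h3
        linarith
      have h4 : ⟪w s j, p⟫ = (G s *ᵥ a) j := by
        rw [hprep, inner_sum]
        simp only [Matrix.mulVec, dotProduct, G, Matrix.of_apply]
        exact Finset.sum_congr rfl fun k _ => by rw [real_inner_smul_right]; ring
      rw [h1, h2, h4]
    rw [hLapp, hc]
    -- z := mpinv G (G a) - a  is killed by G, hence by W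
    have hzero : ∀ z : Fin N → ℝ, G s *ᵥ z = 0 → ∑ i, z i • w s i = 0 := by
      intro z hz
      have : ⟪∑ i, z i • w s i, ∑ j, z j • w s j⟫ = 0 := by
        rw [← hdot s z, hz, dotProduct_zero]
      exact inner_self_eq_zero.mp this
    have hGz : G s *ᵥ (mpinv (G s) *ᵥ (G s *ᵥ a) - a) = 0 := by
      rw [Matrix.mulVec_sub]
      have h5 : G s *ᵥ (mpinv (G s) *ᵥ (G s *ᵥ a)) = G s *ᵥ a := by
        rw [Matrix.mulVec_mulVec, Matrix.mulVec_mulVec, mpinv_GGG (G s) (hpsd s).1]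
      rw [h5, sub_self]
    have hfin : ∑ i, (mpinv (G s) *ᵥ (G s *ᵥ a)) i • w s i = ∑ i, a i • w s i := by
      have hz0 := hzero _ hGz
      have hsub : ∑ i, (mpinv (G s) *ᵥ (G s *ᵥ a)) i • w s i - ∑ i, a i • w s i =
          ∑ i, ((mpinv (G s) *ᵥ (G s *ᵥ a) - a) i) • w s i := by
        rw [← Finset.sum_sub_distrib]
        refine Finset.sum_congr rfl fun i _ => ?_
        rw [Pi.sub_apply, sub_smul]
      have h0 : ∑ i, (mpinv (G s) *ᵥ (G s *ᵥ a)) i • w s i - ∑ i, a i • w s i = 0 := by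
        rw [hsub, hz0]
      rw [← sub_eq_zero]
      exact h0
    rw [hfin, ← hprep]
    simp [Submodule.subtypeL_apply, hp]
    rfl
  -- assemble
  refine ⟨Pt, L, ?_, ?_, ?_, ?_, ?_⟩
  · intro x
    have hrw : (fun s => Pt s x) = fun s =>
        ∑ i, ∑ j, (mpinv (G s) i j * ⟪v j, x⟫) • (F s (w s i)) := by
      funext s
      simp only [Pt, ContinuousLinearMap.sum_apply, ContinuousLinearMap.smul_apply,
        ContinuousLinearMap.smulRight_apply, innerSL_apply_apply, smul_smul]
    rw [hrw]
    refine Finset.stronglyMeasurable_fun_sum _ fun i _ => ?_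
    refine Finset.stronglyMeasurable_fun_sum _ fun j _ => ?_
    exact ((hm.eval.eval.mul_const _).stronglyMeasurable).smul
      (sm_comp F hmeas (hmeas (v i)))
  · intro x
    have hrw : (fun s => L s x) = fun s =>
        ∑ i, ∑ j, (mpinv (G s) i j * ⟪v j, x⟫) • (w s i) := by
      funext s
      simp only [L, ContinuousLinearMap.sum_apply, ContinuousLinearMap.smul_apply,
        ContinuousLinearMap.smulRight_apply, innerSL_apply_apply, smul_smul]
    rw [hrw]
    refine Finset.stronglyMeasurable_fun_sum _ fun i _ => ?_
    refine Finset.stronglyMeasurable_fun_sum _ fun j _ => ?_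
    exact ((hm.eval.eval.mul_const _).stronglyMeasurable).smul (hmeas (v i))
  · intro s h
    rw [hPtF, hkey]
  · intro s h
    exact hkey s h
  · intro s h
    rw [hPtF s (Pt s h), hPtF s h, hkey s (L s h)]
    congr 1
    simp only [Submodule.subtypeL_apply]
    exact Submodule.starProjection_eq_self_iff.mpr (hLmem s h)
end
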